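/- arXiv:2509.17258 — 5 statements merged into one kernel-verified Lean document; each statement's English description precedes it below -/
import Mathlib

section
/- Let d, k, n be positive integers with n ≡ k (mod d) and let ζ be a primitive d-th root of unity. Then the q-binomial coefficient [n choose k]_q evaluated at q = ζ equals the ordinary binomial coefficient C(⌊n/d⌋, ⌊k/d⌋). -/
open Polynomial in
/-- The Gaussian binomial coefficient `[n choose k]_q` as an integer polynomial in `q`,
defined via the `q`-Pascal recursion
`[n+1 choose k+1]_q = [n choose k]_q + q^{k+1}·[n choose k+1]_q`;
it equals `[n]_q!/([k]_q!·[n-k]_q!)`. -/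
noncomputable def qbinom : ℕ → ℕ → Polynomial ℤ
  | _, 0 => 1
  | 0, _ + 1 => 0
  | n + 1, k + 1 => qbinom n k + X ^ (k + 1) * qbinom n (k + 1)

namespace QLucasAux

open Polynomial Finset

lemma qbinom_rec (n k : ℕ) :
    qbinom (n+1) (k+1) = qbinom n k + X ^ (k + 1) * qbinom n (k + 1) := rfl

lemma qbinom_zero_right (n : ℕ) : qbinom n 0 = 1 := by cases n <;> rfl

lemma qbinom_eq_zero : ∀ n k : ℕ, n < k → qbinom n k = 0
  | 0, k + 1, _ => rfl
  | n + 1, k + 1, h => by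
      rw [qbinom_rec, qbinom_eq_zero n k (by omega), qbinom_eq_zero n (k+1) (by omega)]
      ring

lemma qbinom_self : ∀ n : ℕ, qbinom n n = 1
  | 0 => rfl
  | n + 1 => by
      rw [qbinom_rec, qbinom_self n, qbinom_eq_zero n (n+1) (by omega)]
      ring

/-- The `q`-integer `[m]_q = 1 + q + ⋯ + q^{m-1}` as a polynomial. -/
noncomputable def qint (m : ℕ) : Polynomial ℤ := ∑ i ∈ Finset.range m, X ^ i

lemma qint_zero : qint 0 = 0 := by simp [qint]

lemma qint_succ (m : ℕ) : qint (m + 1) = qint m + X ^ m :=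
  sum_range_succ _ _

lemma qint_add (a b : ℕ) : qint (a + b) = qint a + X ^ a * qint b := by
  induction b with
  | zero => simp [qint]
  | succ b ih =>
      rw [show a + (b+1) = (a+b)+1 from rfl, qint_succ, ih, qint_succ]
      ring

/-- The two `q`-absorption identities, proven by simultaneous induction. -/
lemma absorb : ∀ n : ℕ,
    (∀ k, qint (k+1) * qbinom (n+1) (k+1) = qint (n+1) * qbinom n k) ∧
    (∀ k, qint (n+1-k) * qbinom (n+1) k = qint (n+1) * qbinom n k) := by
  intro n
  induction n with
  | zero =>
      constructor
      · intro k
        cases k with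
        | zero => rw [qbinom_self, qbinom_zero_right]
        | succ k =>
            rw [qbinom_eq_zero 1 (k+2) (by omega), qbinom_eq_zero 0 (k+1) (by omega)]
            ring
      · intro k
        match k with
        | 0 => rw [qbinom_zero_right, qbinom_zero_right]
        | 1 => rw [show 1-1 = 0 from rfl, qint_zero, qbinom_eq_zero 0 1 (by omega)]; ring
        | (k+2) =>
            rw [qbinom_eq_zero 1 (k+2) (by omega), qbinom_eq_zero 0 (k+2) (by omega)]
            ring
  | succ n ih =>
      obtain ⟨ihA, ihB⟩ := ih
      have A : ∀ k, qint (k+1) * qbinom (n+2) (k+1) = qint (n+2) * qbinom (n+1) k := by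
        intro k
        by_cases hk : k ≤ n + 1
        · have hdec : qint (n+2) = qint (k+1) + X ^ (k+1) * qint (n+1-k) := by
            rw [← qint_add]; congr 1; omega
          rw [qbinom_rec, hdec]
          linear_combination (X : Polynomial ℤ)^(k+1) * ihA k - X^(k+1) * ihB k
        · rw [qbinom_eq_zero (n+2) (k+1) (by omega), qbinom_eq_zero (n+1) k (by omega)]
          ring
      refine ⟨A, ?_⟩
      intro k
      match k with
      | 0 => rw [qbinom_zero_right, qbinom_zero_right, Nat.sub_zero]
      | (j+1) =>
          by_cases hj : j ≤ n
          · have hdec : qint (n+2) = qint (j+1) + X ^ (j+1) * qint (n+1-j) := by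
              rw [← qint_add]; congr 1; omega
            have hsub : n + 2 - (j+1) = n + 1 - j := by omega
            rw [hsub, qbinom_rec, hdec]
            linear_combination ihB j - ihA j
          · rw [qbinom_eq_zero (n+1) (j+1) (by omega), mul_zero]
            by_cases hj2 : n + 2 ≤ j
            · rw [qbinom_eq_zero (n+1+1) (j+1) (by omega)]; ring
            · rw [show n+1+1-(j+1) = 0 by omega, qint_zero]; ring

lemma aeval_qint (ζ : ℂ) (m : ℕ) : aeval ζ (qint m) = ∑ i ∈ range m, ζ ^ i := by
  simp [qint]

/-- At a primitive `d`-th root of unity, `[d choose j]` vanishes for `0 < j < d`. -/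
lemma key {d : ℕ} {ζ : ℂ} (hζ : IsPrimitiveRoot ζ d) {j : ℕ} (h0 : 0 < j) (hjd : j < d) :
    aeval ζ (qbinom d j) = 0 := by
  have hd2 : 1 < d := by omega
  have h := (absorb (d-1)).1 (j-1)
  rw [show d - 1 + 1 = d by omega, show j - 1 + 1 = j by omega] at h
  have h2 := congrArg (aeval ζ) h
  simp only [map_mul, aeval_qint] at h2
  rw [hζ.geom_sum_eq_zero hd2, zero_mul] at h2
  have hne : (∑ i ∈ range j, ζ ^ i) ≠ 0 := by
    rw [geom_sum_eq (hζ.ne_one hd2)]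
    exact div_ne_zero (sub_ne_zero.mpr (hζ.pow_ne_one_of_pos_of_lt h0.ne' hjd))
      (sub_ne_zero.mpr (hζ.ne_one hd2))
  exact (mul_eq_zero.mp h2).resolve_left hne

lemma succ_facts_dvd {d n : ℕ} (hd : 0 < d) (h : d ∣ (n+1)) :
    n % d = d - 1 ∧ (n+1) % d = 0 ∧ (n+1) / d = n / d + 1 := by
  have h1 : d * (n/d) + (n % d + 1) = n + 1 := by
    rw [← add_assoc, Nat.div_add_mod]
  have h2 : d ∣ n % d + 1 := by
    have := (Nat.dvd_add_right (Dvd.intro (n/d) rfl)).mp (h1 ▸ h)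
    exact this
  have h3 : n % d < d := Nat.mod_lt _ hd
  have h4 : d ≤ n % d + 1 := Nat.le_of_dvd (by omega) h2
  refine ⟨by omega, (Nat.mod_eq_zero_of_dvd h), ?_⟩
  rw [Nat.succ_div, if_pos h]

lemma succ_facts_not_dvd {d n : ℕ} (hd : 0 < d) (h : ¬ d ∣ (n+1)) :
    (n+1) % d = n % d + 1 ∧ (n+1) / d = n / d := by
  have h1 : d * (n/d) + (n % d + 1) = n + 1 := by
    rw [← add_assoc, Nat.div_add_mod]
  have h3 : n % d < d := Nat.mod_lt _ hd
  have hlt : n % d + 1 < d := by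
    rcases Nat.lt_or_ge (n % d + 1) d with h' | h'
    · exact h'
    · exfalso
      have : n % d + 1 = d := by omega
      exact h ⟨n/d + 1, by rw [Nat.mul_succ]; omega⟩
  constructor
  · rw [← h1, Nat.mul_add_mod, Nat.mod_eq_of_lt hlt]
  · rw [Nat.succ_div, if_neg h, Nat.add_zero]

lemma zeta_pow_of_dvd {d : ℕ} {ζ : ℂ} (hζ : IsPrimitiveRoot ζ d) {t : ℕ} (h : d ∣ t) :
    ζ ^ t = 1 := by
  obtain ⟨c, rfl⟩ := h
  rw [pow_mul, hζ.pow_eq_one, one_pow]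

lemma zeta_pow_mod {d : ℕ} {ζ : ℂ} (hζ : IsPrimitiveRoot ζ d) (t : ℕ) :
    ζ ^ t = ζ ^ (t % d) := by
  conv_lhs => rw [← Nat.div_add_mod t d]
  rw [pow_add, pow_mul, hζ.pow_eq_one, one_pow, one_mul]

end QLucasAux

open Polynomial Finset QLucasAux in
lemma qlucas (d : ℕ) (hd : 0 < d) (ζ : ℂ) (hζ : IsPrimitiveRoot ζ d) :
    ∀ n k : ℕ, Polynomial.aeval ζ (qbinom n k) =
      (Nat.choose (n / d) (k / d) : ℂ) * Polynomial.aeval ζ (qbinom (n % d) (k % d)) := by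
  intro n
  induction n with
  | zero =>
      intro k
      rcases k with _ | k
      · simp [qbinom_zero_right]
      · rcases Nat.lt_or_ge (k+1) d with hlt | hge
        · rw [Nat.div_eq_of_lt hlt, Nat.mod_eq_of_lt hlt, Nat.zero_div, Nat.zero_mod]
          simp [show qbinom 0 (k+1) = 0 from rfl]
        · have hpos : 0 < (k+1)/d := Nat.div_pos hge hd
          rw [show qbinom 0 (k+1) = 0 from rfl, Nat.zero_div,
            Nat.choose_eq_zero_of_lt (by omega)]
          simp
  | succ n ih =>
      intro k
      rcases k with _ | m
      · simp [qbinom_zero_right]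
      · have hrec : Polynomial.aeval ζ (qbinom (n+1) (m+1)) =
            Polynomial.aeval ζ (qbinom n m) + ζ^(m+1) * Polynomial.aeval ζ (qbinom n (m+1)) := by
          rw [qbinom_rec]; simp
        rw [hrec, ih m, ih (m+1)]
        by_cases hn1 : d ∣ (n+1) <;> by_cases hm1 : d ∣ (m+1)
        · -- both step over a multiple of d
          obtain ⟨hr, hz, hdiv⟩ := succ_facts_dvd hd hn1
          obtain ⟨hs, hz', hdiv'⟩ := succ_facts_dvd hd hm1
          rw [hdiv, hdiv', hz, hz', hr, hs, zeta_pow_of_dvd hζ hm1,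
            qbinom_self, qbinom_zero_right, qbinom_zero_right, Nat.choose_succ_succ]
          push_cast
          ring
        · -- n+1 crosses a multiple of d, m+1 does not
          obtain ⟨hr, hz, hdiv⟩ := succ_facts_dvd hd hn1
          obtain ⟨hs, hdiv'⟩ := succ_facts_not_dvd hd hm1
          have hslt : m % d + 1 < d := by
            have := Nat.mod_lt (m+1) hd
            omega
          rw [hdiv, hdiv', hz, hs, hr, zeta_pow_mod hζ (m+1), hs,
            show qbinom 0 (m % d + 1) = 0 from rfl]
          have hstep : Polynomial.aeval ζ (qbinom d (m % d + 1)) =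
              Polynomial.aeval ζ (qbinom (d-1) (m % d)) +
                ζ^(m % d + 1) * Polynomial.aeval ζ (qbinom (d-1) (m % d + 1)) := by
            have : Polynomial.aeval ζ (qbinom ((d-1)+1) (m % d + 1)) =
                Polynomial.aeval ζ (qbinom (d-1) (m % d)) +
                  ζ^(m % d + 1) * Polynomial.aeval ζ (qbinom (d-1) (m % d + 1)) := by
              rw [qbinom_rec]; simp
            rwa [show d - 1 + 1 = d by omega] at this
          have hkey : Polynomial.aeval ζ (qbinom d (m % d + 1)) = 0 :=
            key hζ (by omega) hslt
          rw [hstep] at hkey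
          rw [map_zero]
          linear_combination ((n/d).choose (m/d) : ℂ) * hkey
        · -- m+1 crosses a multiple of d, n+1 does not
          obtain ⟨hr, hdiv⟩ := succ_facts_not_dvd hd hn1
          obtain ⟨hs, hz', hdiv'⟩ := succ_facts_dvd hd hm1
          have hrlt : n % d + 1 < d := by
            have := Nat.mod_lt (n+1) hd
            omega
          rw [hdiv, hdiv', hz', hr, hs, zeta_pow_of_dvd hζ hm1,
            qbinom_eq_zero (n % d) (d-1) (by omega), qbinom_zero_right, qbinom_zero_right]
          simp
        · -- generic case
          obtain ⟨hr, hdiv⟩ := succ_facts_not_dvd hd hn1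
          obtain ⟨hs, hdiv'⟩ := succ_facts_not_dvd hd hm1
          rw [hdiv, hdiv', hr, hs, zeta_pow_mod hζ (m+1), hs]
          have hstep : Polynomial.aeval ζ (qbinom (n % d + 1) (m % d + 1)) =
              Polynomial.aeval ζ (qbinom (n % d) (m % d)) +
                ζ^(m % d + 1) * Polynomial.aeval ζ (qbinom (n % d) (m % d + 1)) := by
            rw [qbinom_rec]; simp
          rw [hstep]
          ring

/-- for positive integers `d, k, n` with `n ≡ k (mod d)` and `ζ` a primitive
`d`-th root of unity, `[n choose k]_q` evaluated at `q = ζ` equals `C(⌊n/d⌋, ⌊k/d⌋)`. -/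
theorem stmt1 (d k n : ℕ) (hd : 0 < d) (hk : 0 < k) (hn : 0 < n)
    (hmod : n % d = k % d) (ζ : ℂ) (hζ : IsPrimitiveRoot ζ d) :
    Polynomial.aeval ζ (qbinom n k) = (Nat.choose (n / d) (k / d) : ℂ) := by
  rw [qlucas d hd ζ hζ n k, hmod, QLucasAux.qbinom_self, map_one, mul_one]
end

section
/- Let d, k, n be positive integers with k ≡ -1 (mod d) and n ≢ -1 (mod d), and let ζ be a primitive d-th root of unity. Then the q-binomial coefficient [n choose k]_q evaluated at q = ζ equals 0. -/
open Polynomial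

lemma qbinom_zero_right (n : ℕ) : qbinom n 0 = 1 := by cases n <;> rfl

lemma qbinom_eq_zero : ∀ n k : ℕ, n < k → qbinom n k = 0
  | 0, _ + 1, _ => rfl
  | n + 1, k + 1, h => by
    rw [qbinom, qbinom_eq_zero n k (by omega), qbinom_eq_zero n (k + 1) (by omega)]
    ring

lemma qbinom_key : ∀ n k : ℕ,
    (1 - X ^ (n - k)) * qbinom n k = (1 - (X : Polynomial ℤ) ^ (k + 1)) * qbinom n (k + 1)
  | 0, 0 => by
    rw [qbinom_zero_right, qbinom_eq_zero 0 1 (by omega)]; simp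
  | 0, k + 1 => by
    rw [qbinom_eq_zero 0 (k + 1) (by omega), qbinom_eq_zero 0 (k + 2) (by omega)]; ring
  | n + 1, 0 => by
    have h := qbinom_key n 0
    rw [qbinom_zero_right] at h ⊢
    show _ = _ * qbinom (n + 1) (0 + 1)
    rw [qbinom, qbinom_zero_right]
    simp only [Nat.sub_zero] at h ⊢
    linear_combination X * h
  | n + 1, k + 1 => by
    rcases lt_or_ge k n with hlt | hge
    · obtain ⟨m, rfl⟩ : ∃ m, n = k + 1 + m := ⟨n - (k + 1), by omega⟩
      have h1 := qbinom_key (k + 1 + m) k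
      have h2 := qbinom_key (k + 1 + m) (k + 1)
      have e1 : k + 1 + m - k = m + 1 := by omega
      have e2 : k + 1 + m - (k + 1) = m := by omega
      have e3 : k + 1 + m + 1 - (k + 1) = m + 1 := by omega
      rw [e1] at h1
      rw [e2] at h2
      rw [e3]
      show (1 - X ^ (m + 1)) * (qbinom (k + 1 + m) k + X ^ (k + 1) * qbinom (k + 1 + m) (k + 1))
        = (1 - X ^ (k + 1 + 1)) *
          (qbinom (k + 1 + m) (k + 1) + X ^ (k + 1 + 1) * qbinom (k + 1 + m) (k + 2))
      linear_combination h1 + X ^ (k + 2) * h2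
    · -- k ≥ n : everything vanishes
      have e : n + 1 - (k + 1) = n - k := by omega
      rw [e]
      show (1 - X ^ (n - k)) * (qbinom n k + X ^ (k + 1) * qbinom n (k + 1))
        = (1 - X ^ (k + 1 + 1)) * (qbinom n (k + 1) + X ^ (k + 1 + 1) * qbinom n (k + 2))
      rw [qbinom_eq_zero n (k + 1) (by omega), qbinom_eq_zero n (k + 2) (by omega)]
      rcases eq_or_lt_of_le hge with rfl | h
      · have : n - n = 0 := by omega
        rw [this]; ring
      · rw [qbinom_eq_zero n k h]; ring

/-- for positive integers `d, k, n` with `k ≡ -1 (mod d)`, `n ≢ -1 (mod d)`,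
and `ζ` a primitive `d`-th root of unity, `[n choose k]_q` evaluated at `q = ζ` is `0`. -/
theorem stmt2 (d k n : ℕ) (hd : 0 < d) (hk : 0 < k) (hn : 0 < n)
    (hkmod : (k + 1) % d = 0) (hnmod : (n + 1) % d ≠ 0)
    (ζ : ℂ) (hζ : IsPrimitiveRoot ζ d) :
    Polynomial.aeval ζ (qbinom n k) = 0 := by
  have hdk : d ∣ k + 1 := Nat.dvd_of_mod_eq_zero hkmod
  rcases lt_or_ge n k with h | h
  · rw [qbinom_eq_zero n k h]; simp
  · have hkn : k < n := by
      rcases eq_or_lt_of_le h with rfl | h'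
      · exact absurd hkmod hnmod
      · exact h'
    have key := congrArg (Polynomial.aeval ζ) (qbinom_key n k)
    simp only [map_mul, map_sub, map_one, map_pow, Polynomial.aeval_X] at key
    have hz : ζ ^ (k + 1) = 1 := hζ.pow_eq_one_iff_dvd (k + 1) |>.mpr hdk
    rw [hz, sub_self, zero_mul] at key
    have hne : (1 : ℂ) - ζ ^ (n - k) ≠ 0 := by
      intro hc
      have h1 : ζ ^ (n - k) = 1 := (sub_eq_zero.mp hc).symm
      have hdvd : d ∣ n - k := (hζ.pow_eq_one_iff_dvd (n - k)).mp h1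
      have hdn : d ∣ n + 1 := by
        obtain ⟨a, ha⟩ := hdvd
        obtain ⟨b, hb⟩ := hdk
        exact ⟨a + b, by rw [Nat.mul_add]; omega⟩
      exact hnmod (Nat.mod_eq_zero_of_dvd hdn)
    exact (mul_eq_zero.mp key).resolve_left hne
end

section
/- Let μ = (μ_1,...,μ_n) with k = Σ μ_i even, n = Σ i·μ_i, and all μ_i even, with 2 dividing n+2. Then a_μ(-1) = C((n+k)/2, k/2) · multinomial(k/2; μ_1/2,...,μ_n/2), where a_μ(q) = (1/[n+1]_q)·[n+k choose k]_q·[k choose μ_1,...,μ_n]_q. -/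
open Polynomial in
/-- The `q`-integer `[m]_q = 1 + q + ⋯ + q^{m-1}` as an integer polynomial. -/
noncomputable def qnat (m : ℕ) : Polynomial ℤ := ∑ i ∈ Finset.range m, X ^ i

/-- The `q`-multinomial coefficient `[k choose μ_1,…,μ_n]_q = [k]_q!/([μ_1]_q!⋯[μ_n]_q!)`
(where `k = Σ μ_i`), written as a product of Gaussian binomials
`∏_i [μ_1+⋯+μ_i choose μ_i]_q`. -/
noncomputable def qmultinom (n : ℕ) (μ : Fin n → ℕ) : Polynomial ℤ :=
  ∏ i : Fin n, qbinom (∑ j ∈ Finset.univ.filter (fun j : Fin n => j ≤ i), μ j) (μ i)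

open Polynomial Finset

lemma qbinom_eval_neg_one : ∀ n k : ℕ, (qbinom n k).eval (-1) =
    if n % 2 = 0 ∧ k % 2 = 1 then 0 else ((n / 2).choose (k / 2) : ℤ) := by
  intro n
  induction n with
  | zero =>
    intro k
    match k with
    | 0 => simp [qbinom]
    | k + 1 =>
      rw [show qbinom 0 (k+1) = 0 from rfl]
      rcases Nat.even_or_odd k with ⟨b, hb⟩ | ⟨b, hb⟩
      · have : (k + 1) % 2 = 1 := by omega
        simp [this]
      · have h1 : ¬ (0 % 2 = 0 ∧ (k + 1) % 2 = 1) := by omega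
        have h2 : (k + 1) / 2 = b + 1 := by omega
        simp [h1, h2]
  | succ n IH =>
    intro k
    match k with
    | 0 => simp [qbinom]
    | k + 1 =>
      rw [show qbinom (n+1) (k+1) = qbinom n k + X ^ (k + 1) * qbinom n (k + 1) from rfl]
      simp only [eval_add, eval_mul, eval_pow, eval_X, IH]
      rcases Nat.even_or_odd n with ⟨a, ha⟩ | ⟨a, ha⟩ <;>
        rcases Nat.even_or_odd k with ⟨b, hb⟩ | ⟨b, hb⟩
      · -- n even, k even
        have s : (-1 : ℤ) ^ (k + 1) = -1 := Odd.neg_one_pow ⟨b, by omega⟩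
        have e1 : n % 2 = 0 := by omega
        have e2 : k % 2 = 0 := by omega
        have e3 : (k+1) % 2 = 1 := by omega
        have e4 : (n+1) % 2 = 1 := by omega
        have d1 : (n+1)/2 = n/2 := by omega
        have d2 : (k+1)/2 = k/2 := by omega
        simp [s, e1, e2, e3, e4, d1, d2]
      · -- n even, k odd
        have s : (-1 : ℤ) ^ (k + 1) = 1 := Even.neg_one_pow ⟨b+1, by omega⟩
        have e1 : n % 2 = 0 := by omega
        have e2 : k % 2 = 1 := by omega
        have e3 : (k+1) % 2 = 0 := by omega
        have e4 : (n+1) % 2 = 1 := by omega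
        have d1 : (n+1)/2 = n/2 := by omega
        simp [s, e1, e2, e3, e4, d1]
      · -- n odd, k even
        have s : (-1 : ℤ) ^ (k + 1) = -1 := Odd.neg_one_pow ⟨b, by omega⟩
        have e1 : n % 2 = 1 := by omega
        have e2 : k % 2 = 0 := by omega
        have e3 : (k+1) % 2 = 1 := by omega
        have e4 : (n+1) % 2 = 0 := by omega
        have d2 : (k+1)/2 = k/2 := by omega
        simp [s, e1, e2, e3, e4, d2]
      · -- n odd, k odd
        have s : (-1 : ℤ) ^ (k + 1) = 1 := Even.neg_one_pow ⟨b+1, by omega⟩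
        have e1 : n % 2 = 1 := by omega
        have e3 : (k+1) % 2 = 0 := by omega
        have e4 : (n+1) % 2 = 0 := by omega
        have d1 : (n+1)/2 = n/2 + 1 := by omega
        have d2 : (k+1)/2 = k/2 + 1 := by omega
        have pascal : (n/2 + 1).choose (k/2 + 1) = (n/2).choose (k/2) + (n/2).choose (k/2 + 1) :=
          Nat.choose_succ_succ _ _
        simp [s, e1, e3, e4, d1, d2, pascal]

lemma filter_le_castSucc (n : ℕ) (i : Fin n) :
    (Finset.univ.filter (fun j : Fin (n+1) => j ≤ i.castSucc)) =
      (Finset.univ.filter (fun j : Fin n => j ≤ i)).map Fin.castSuccEmb := by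
  ext j
  simp only [mem_filter, mem_univ, true_and, mem_map, Fin.coe_castSuccEmb]
  constructor
  · intro hj
    have hlt : j < Fin.last n := lt_of_le_of_lt hj (Fin.castSucc_lt_last i)
    refine ⟨j.castPred hlt.ne, ?_, by simp⟩
    rwa [← Fin.castSucc_le_castSucc_iff, Fin.castSucc_castPred]
  · rintro ⟨j', hj', rfl⟩
    exact Fin.castSucc_le_castSucc_iff.mpr hj'

lemma fact_prod_choose : ∀ (n : ℕ) (ν : Fin n → ℕ),
    (∏ i, Nat.factorial (ν i)) *
      ∏ i : Fin n, Nat.choose (∑ j ∈ Finset.univ.filter (fun j => j ≤ i), ν j) (ν i)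
      = Nat.factorial (∑ i, ν i) := by
  intro n
  induction n with
  | zero => intro ν; simp
  | succ n IH =>
    intro ν
    rw [Fin.prod_univ_castSucc, Fin.prod_univ_castSucc, Fin.sum_univ_castSucc]
    have hlast : (Finset.univ.filter (fun j : Fin (n+1) => j ≤ Fin.last n)) = Finset.univ := by
      simp [Fin.le_last]
    have hS : ∀ i : Fin n,
        (∑ j ∈ Finset.univ.filter (fun j : Fin (n+1) => j ≤ i.castSucc), ν j)
          = ∑ j ∈ Finset.univ.filter (fun j : Fin n => j ≤ i), ν j.castSucc := by
      intro i
      rw [filter_le_castSucc, Finset.sum_map]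
      rfl
    simp only [hS, hlast, Fin.sum_univ_castSucc]
    set T := ∑ i : Fin n, ν i.castSucc with hT
    have := IH (fun i => ν i.castSucc)
    calc (∏ i : Fin n, (ν i.castSucc).factorial) * (ν (Fin.last n)).factorial *
          ((∏ i : Fin n, Nat.choose (∑ j ∈ Finset.univ.filter (fun j : Fin n => j ≤ i), ν j.castSucc) (ν i.castSucc)) *
            (T + ν (Fin.last n)).choose (ν (Fin.last n)))
        = ((∏ i : Fin n, (ν i.castSucc).factorial) *
            (∏ i : Fin n, Nat.choose (∑ j ∈ Finset.univ.filter (fun j : Fin n => j ≤ i), ν j.castSucc) (ν i.castSucc))) *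
          ((T + ν (Fin.last n)).choose (ν (Fin.last n)) * (ν (Fin.last n)).factorial) := by ring
      _ = T.factorial * ((T + ν (Fin.last n)).choose (ν (Fin.last n)) * (ν (Fin.last n)).factorial) := by
          rw [this]
      _ = (T + ν (Fin.last n)).choose (ν (Fin.last n)) * T.factorial * (ν (Fin.last n)).factorial := by ring
      _ = (T + ν (Fin.last n)).factorial := Nat.add_choose_mul_factorial_mul_factorial _ _

lemma prod_choose_eq_multinomial (n : ℕ) (ν : Fin n → ℕ) :
    (∏ i : Fin n, Nat.choose (∑ j ∈ Finset.univ.filter (fun j => j ≤ i), ν j) (ν i))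
      = Nat.multinomial Finset.univ ν := by
  have h1 := fact_prod_choose n ν
  have h2 := Nat.multinomial_spec (Finset.univ : Finset (Fin n)) ν
  have hpos : 0 < ∏ i, Nat.factorial (ν i) :=
    Finset.prod_pos fun i _ => Nat.factorial_pos _
  exact Nat.eq_of_mul_eq_mul_left hpos (h1.trans h2.symm)

/-- for `μ` with all parts even (hence `k = Σ μ_i` even) and `2 ∣ n+2`,
the polynomial `a_μ(q)` (characterized by
`[n+1]_q·a_μ(q) = [n+k choose k]_q·[k choose μ]_q`) evaluates at `q = -1` to
`C((n+k)/2, k/2)·multinomial(k/2; μ_1/2,…,μ_n/2)`. -/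
theorem stmt4 (n k : ℕ) (μ : Fin n → ℕ)
    (hk : k = ∑ i, μ i) (hn : n = ∑ i, (i.val + 1) * μ i)
    (heven : ∀ i : Fin n, 2 ∣ μ i) (h2 : 2 ∣ n + 2)
    (P : Polynomial ℤ) (hP : qnat (n + 1) * P = qbinom (n + k) k * qmultinom n μ) :
    Polynomial.eval (-1 : ℤ) P =
      ((Nat.choose ((n + k) / 2) (k / 2) *
        Nat.multinomial Finset.univ (fun i => μ i / 2) : ℕ) : ℤ) := by
  have hneven : n % 2 = 0 := by omega
  have hkeven : k % 2 = 0 := by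
    have : 2 ∣ k := hk ▸ Finset.dvd_sum (fun i _ => heven i)
    omega
  -- evaluate the hypothesis at -1
  have heval := congrArg (Polynomial.eval (-1 : ℤ)) hP
  rw [Polynomial.eval_mul, Polynomial.eval_mul] at heval
  -- qnat (n+1) evaluates to 1
  have hqnat : (qnat (n + 1)).eval (-1 : ℤ) = 1 := by
    rw [qnat, Polynomial.eval_finset_sum]
    simp only [Polynomial.eval_pow, Polynomial.eval_X]
    rw [neg_one_geom_sum]
    simp [Nat.even_add_one, Nat.even_iff, hneven]
  rw [hqnat, one_mul] at heval
  rw [heval]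
  -- evaluate the Gaussian binomial
  have hb : (qbinom (n + k) k).eval (-1 : ℤ) = (((n + k) / 2).choose (k / 2) : ℤ) := by
    rw [qbinom_eval_neg_one]
    have : ¬ ((n + k) % 2 = 0 ∧ k % 2 = 1) := by omega
    simp [this]
  -- evaluate the q-multinomial
  have hsum : ∀ i : Fin n,
      (∑ j ∈ Finset.univ.filter (fun j : Fin n => j ≤ i), μ j) / 2
        = ∑ j ∈ Finset.univ.filter (fun j : Fin n => j ≤ i), μ j / 2 := by
    intro i
    have : (∑ j ∈ Finset.univ.filter (fun j : Fin n => j ≤ i), μ j)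
        = 2 * ∑ j ∈ Finset.univ.filter (fun j : Fin n => j ≤ i), μ j / 2 := by
      rw [Finset.mul_sum]
      exact Finset.sum_congr rfl fun j _ => by have := heven j; omega
    omega
  have hm : (qmultinom n μ).eval (-1 : ℤ)
      = (Nat.multinomial Finset.univ (fun i => μ i / 2) : ℤ) := by
    rw [qmultinom, Polynomial.eval_prod]
    have hterm : ∀ i : Fin n,
        (qbinom (∑ j ∈ Finset.univ.filter (fun j : Fin n => j ≤ i), μ j) (μ i)).eval (-1 : ℤ)
          = (((∑ j ∈ Finset.univ.filter (fun j : Fin n => j ≤ i), μ j / 2)).choose (μ i / 2) : ℤ) := by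
      intro i
      rw [qbinom_eval_neg_one]
      have hμ : μ i % 2 = 0 := by have := heven i; omega
      have : ¬ ((∑ j ∈ Finset.univ.filter (fun j : Fin n => j ≤ i), μ j) % 2 = 0 ∧ μ i % 2 = 1) := by
        omega
      simp [this, hsum i]
    rw [Finset.prod_congr rfl fun i _ => hterm i]
    rw [← Nat.cast_prod]
    rw [prod_choose_eq_multinomial n (fun i => μ i / 2)]
  rw [hb, hm]
  push_cast
  ring
end

section
/- Let μ = (μ_1,...,μ_n) with k = Σ μ_i and n = Σ i·μ_i, and let d divide n+2 with d > 1. If μ does not satisfy either (i) exactly one index j with μ_j ≡ 1 (mod d) and μ_i ≡ 0 (mod d) for all i ≠ j, or (ii) d = 2 and all μ_i even, then the number of dissections of a convex (n+2)-gon of type μ that are invariant under rotation by 2π/d is 0. -/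
/-- Cyclic gap (number of clockwise steps) from vertex `a` to vertex `b` in an `N`-gon. -/
def gap (N : ℕ) (a b : Fin N) : ℕ := (b.val + N - a.val) % N

/-- `x` lies strictly inside the clockwise arc from `a` to `b`. -/
def Betw (N : ℕ) (a x b : Fin N) : Prop := 0 < gap N a x ∧ gap N a x < gap N a b

/-- A diagonal of the `N`-gon: an unordered pair of distinct, non-adjacent vertices. -/
def IsDiag (N : ℕ) (e : Sym2 (Fin N)) : Prop :=
  ∀ a b : Fin N, e = s(a, b) → 2 ≤ gap N a b ∧ 2 ≤ gap N b a

/-- Two chords cross if their endpoints strictly interleave around the polygon. -/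
def Crossing (N : ℕ) (e f : Sym2 (Fin N)) : Prop :=
  ∃ a b c d : Fin N, e = s(a, b) ∧ f = s(c, d) ∧ Betw N a c b ∧ Betw N b d a

/-- A dissection: a set of pairwise noncrossing diagonals. -/
def IsDissection (N : ℕ) (T : Finset (Sym2 (Fin N))) : Prop :=
  (∀ e ∈ T, IsDiag N e) ∧ ∀ e ∈ T, ∀ f ∈ T, e ≠ f → ¬ Crossing N e f

/-- `a` and `b` are joined by a boundary edge of the polygon or a diagonal of `T`. -/
def IsSide (N : ℕ) (T : Finset (Sym2 (Fin N))) (a b : Fin N) : Prop :=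
  gap N a b = 1 ∨ gap N b a = 1 ∨ s(a, b) ∈ T

/-- `a` and `b` are cyclically consecutive elements of `S`. -/
def Consec (N : ℕ) (S : Finset (Fin N)) (a b : Fin N) : Prop :=
  a ∈ S ∧ b ∈ S ∧ a ≠ b ∧ ∀ x ∈ S, ¬ Betw N a x b

/-- `S` is the vertex set of a subgon (face) of the dissection `T`. -/
def IsFace (N : ℕ) (T : Finset (Sym2 (Fin N))) (S : Finset (Fin N)) : Prop :=
  3 ≤ S.card ∧
  (∀ a b : Fin N, Consec N S a b → IsSide N T a b) ∧
  (∀ a b : Fin N, a ∈ S → b ∈ S → s(a, b) ∈ T → Consec N S a b)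

/-- Number of faces of `T` with exactly `p` vertices. -/
noncomputable def faceCount (N : ℕ) (T : Finset (Sym2 (Fin N))) (p : ℕ) : ℕ :=
  Nat.card {S : Finset (Fin N) // IsFace N T S ∧ S.card = p}

/-- The dissection `T` has type `μ`: exactly `μ i` faces which are `(i+3)`-gons
(`μ` is indexed so that `μ i` records `(i+1+2)`-gons, i.e. it is `μ_{i+1}` of the paper). -/
def HasType (N n : ℕ) (T : Finset (Sym2 (Fin N))) (μ : Fin n → ℕ) : Prop :=
  ∀ i : Fin n, faceCount N T (i.val + 3) = μ i



attribute [local instance] Classical.propDecidable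

section GapLemmas
variable {N : ℕ}

lemma gap_lt (hN : 0 < N) (a b : Fin N) : gap N a b < N := Nat.mod_lt _ hN

lemma add_gap (a b : Fin N) : (a.val + gap N a b) % N = b.val := by
  have ha := a.isLt
  have hb := b.isLt
  unfold gap
  rw [Nat.add_mod_mod]
  have h1 : a.val + (b.val + N - a.val) = b.val + N := by omega
  rw [h1, Nat.add_mod_right, Nat.mod_eq_of_lt hb]

lemma gap_unique (a b : Fin N) (g : ℕ) (hg : g < N) (h : (a.val + g) % N = b.val) :
    g = gap N a b := by
  have hN : 0 < N := by omega
  have h2 := add_gap a b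
  have h3 : g ≡ gap N a b [MOD N] :=
    Nat.ModEq.add_left_cancel' a.val (h.trans h2.symm : _ ≡ _ [MOD N])
  have := gap_lt hN a b
  unfold Nat.ModEq at h3
  rwa [Nat.mod_eq_of_lt hg, Nat.mod_eq_of_lt this] at h3

lemma gap_self (hN : 0 < N) (a : Fin N) : gap N a a = 0 := by
  unfold gap
  have := a.isLt
  have h : a.val + N - a.val = N := by omega
  rw [h, Nat.mod_self]

lemma gap_eq_zero_iff (hN : 0 < N) {a b : Fin N} : gap N a b = 0 ↔ a = b := by
  constructor
  · intro h
    have h2 := add_gap a b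
    rw [h, Nat.add_zero, Nat.mod_eq_of_lt a.isLt] at h2
    exact Fin.ext h2
  · rintro rfl; exact gap_self hN a

lemma gap_pos (hN : 0 < N) {a b : Fin N} (h : a ≠ b) : 0 < gap N a b :=
  Nat.pos_of_ne_zero (fun h0 => h ((gap_eq_zero_iff hN).1 h0))

lemma gap_left_inj (hN : 0 < N) {a b c : Fin N} (h : gap N a b = gap N a c) : b = c := by
  have h1 := add_gap a b
  have h2 := add_gap a c
  rw [h] at h1
  exact Fin.ext (h1.symm.trans h2)

lemma gap_add_of_le {a b c : Fin N} (h : gap N a b ≤ gap N a c) :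
    gap N b c = gap N a c - gap N a b := by
  have hN : 0 < N := Fin.pos a
  have hlt := gap_lt hN a c
  refine (gap_unique b c _ (by omega) ?_).symm
  rw [← add_gap a b, Nat.mod_add_mod]
  have h1 : a.val + gap N a b + (gap N a c - gap N a b) = a.val + gap N a c := by omega
  rw [h1, add_gap]

lemma gap_add_of_gt {a b c : Fin N} (h : gap N a c < gap N a b) :
    gap N b c = N - gap N a b + gap N a c := by
  have hN : 0 < N := Fin.pos a
  have hlt := gap_lt hN a b
  have hlt2 := gap_lt hN a c
  refine (gap_unique b c _ (by omega) ?_).symm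
  rw [← add_gap a b, Nat.mod_add_mod]
  have h1 : a.val + gap N a b + (N - gap N a b + gap N a c) = (a.val + gap N a c) + N := by omega
  rw [h1, Nat.add_mod_right, add_gap]

lemma gap_rev (hN : 0 < N) {a b : Fin N} (h : a ≠ b) : gap N a b + gap N b a = N := by
  have hs : gap N a a = 0 := gap_self hN a
  have hpos : 0 < gap N a b := gap_pos hN h
  have hlt := gap_lt hN a b
  rcases le_or_gt (gap N a b) (gap N a a) with hle | hgt
  · omega
  · have h1 := gap_add_of_gt hgt
    omega

lemma gap_shift (a b c : Fin N) : gap N (a + c) (b + c) = gap N a b := by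
  have hN : 0 < N := Fin.pos a
  refine (gap_unique _ _ _ (gap_lt hN a b) ?_).symm
  rw [Fin.val_add, Fin.val_add, Nat.mod_add_mod]
  have h1 : a.val + c.val + gap N a b = c.val + (a.val + gap N a b) := by ring
  rw [h1, ← Nat.add_mod_mod, add_gap, Nat.add_comm c.val b.val]

lemma betw_shift (a x b c : Fin N) : Betw N (a + c) (x + c) (b + c) ↔ Betw N a x b := by
  unfold Betw
  rw [gap_shift, gap_shift]

lemma gap_add_val (a x t : Fin N) : gap N a (x + t) = (gap N a x + t.val) % N := by
  have hN : 0 < N := Fin.pos a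
  refine (gap_unique _ _ _ (Nat.mod_lt _ hN) ?_).symm
  rw [Nat.add_mod_mod, ← Nat.add_assoc, ← Nat.mod_add_mod, add_gap, Fin.val_add]

lemma val_neg_of_ne [NeZero N] {t : Fin N} (ht : t ≠ 0) : (-t).val = N - t.val := by
  have hN : 0 < N := Fin.pos t
  have h := congrArg Fin.val (add_neg_cancel t)
  rw [Fin.val_add, Fin.val_zero] at h
  have h1 : 0 < t.val := Nat.pos_of_ne_zero (fun h0 => ht (Fin.ext h0))
  have h2 := t.isLt
  have h3 := (-t).isLt
  rcases Nat.lt_or_ge (t.val + (-t).val) N with hlt | hge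
  · rw [Nat.mod_eq_of_lt hlt] at h; omega
  · rw [Nat.mod_eq_sub_mod hge, Nat.mod_eq_of_lt (by omega)] at h
    omega

end GapLemmas

section Structure
variable {N : ℕ}

lemma exists_succ (hN : 0 < N) {S : Finset (Fin N)} {c : Fin N} (hc : c ∈ S)
    (h2 : 2 ≤ S.card) : ∃ b, Consec N S c b := by
  have hne : (S.erase c).Nonempty := by
    rw [← Finset.card_pos, Finset.card_erase_of_mem hc]; omega
  obtain ⟨b, hb, hmin⟩ := Finset.exists_min_image (S.erase c) (fun x => gap N c x) hne
  refine ⟨b, hc, Finset.mem_of_mem_erase hb, (Finset.ne_of_mem_erase hb).symm, ?_⟩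
  rintro x hx ⟨hx1, hx2⟩
  have hxc : x ≠ c := fun h => by rw [h, gap_self hN] at hx1; omega
  have := hmin x (Finset.mem_erase.mpr ⟨hxc, hx⟩)
  omega

lemma exists_pred (hN : 0 < N) {S : Finset (Fin N)} {c : Fin N} (hc : c ∈ S)
    (h2 : 2 ≤ S.card) : ∃ p, Consec N S p c := by
  have hne : (S.erase c).Nonempty := by
    rw [← Finset.card_pos, Finset.card_erase_of_mem hc]; omega
  obtain ⟨p, hp, hmax⟩ := Finset.exists_max_image (S.erase c) (fun x => gap N c x) hne
  have hpc : p ≠ c := Finset.ne_of_mem_erase hp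
  have hgcp : 0 < gap N c p := gap_pos hN (Ne.symm hpc)
  have hgcplt := gap_lt hN c p
  refine ⟨p, Finset.mem_of_mem_erase hp, hc, hpc, ?_⟩
  rintro x hx ⟨hx1, hx2⟩
  have hxp : x ≠ p := fun h => by rw [h, gap_self hN] at hx1; omega
  by_cases hxc : x = c
  · rw [hxc] at hx2
    exact absurd hx2 (lt_irrefl _)
  · have hle := hmax x (Finset.mem_erase.mpr ⟨hxc, hx⟩)
    have hnex : gap N c x ≠ gap N c p := fun h => hxp (gap_left_inj hN h)
    have hxlt : gap N c x < gap N c p := by omega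
    have h3 : gap N p x = N - gap N c p + gap N c x := gap_add_of_gt hxlt
    have h4 : gap N p c = N - gap N c p := by
      have := gap_rev hN hpc; omega
    have h5 : 0 < gap N c x := gap_pos hN (Ne.symm hxc)
    omega

lemma exists_consec_betw (hN : 0 < N) {S : Finset (Fin N)} (h2 : 2 ≤ S.card)
    {v : Fin N} (hv : v ∉ S) : ∃ a b, Consec N S a b ∧ Betw N a v b := by
  have hne : S.Nonempty := Finset.card_pos.mp (by omega)
  obtain ⟨a, ha, hmin⟩ := Finset.exists_min_image S (fun x => gap N x v) hne
  obtain ⟨b, hab⟩ := exists_succ hN ha h2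
  have hva : v ≠ a := fun h => hv (h ▸ ha)
  have hvb : v ≠ b := fun h => hv (h ▸ hab.2.1)
  have hgav : 0 < gap N a v := gap_pos hN (Ne.symm hva)
  have hgab : 0 < gap N a b := gap_pos hN hab.2.2.1
  refine ⟨a, b, hab, hgav, ?_⟩
  by_contra hge
  push_neg at hge
  have hnevb : gap N a b ≠ gap N a v := fun h => hvb (gap_left_inj hN h).symm
  have hlt : gap N a b < gap N a v := by omega
  have h3 : gap N b v = gap N a v - gap N a b := gap_add_of_le (by omega)
  have h4 := hmin b hab.2.1
  omega

lemma consec_image {S : Finset (Fin N)} {a b c : Fin N} (h : Consec N S a b) :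
    Consec N (S.image (fun x => x + c)) (a + c) (b + c) := by
  obtain ⟨ha, hb, hne, hbet⟩ := h
  refine ⟨Finset.mem_image_of_mem _ ha, Finset.mem_image_of_mem _ hb,
    fun h => hne (by exact add_right_cancel h), ?_⟩
  intro x hx
  obtain ⟨y, hy, rfl⟩ := Finset.mem_image.mp hx
  rw [betw_shift]
  exact hbet y hy

lemma consec_of_image {S : Finset (Fin N)} {a b c : Fin N}
    (h : Consec N (S.image (fun x => x + c)) (a + c) (b + c)) : Consec N S a b := by
  obtain ⟨ha, hb, hne, hbet⟩ := h
  have hmem : ∀ y : Fin N, y + c ∈ S.image (fun x => x + c) → y ∈ S := by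
    intro y hy
    obtain ⟨z, hz, hzy⟩ := Finset.mem_image.mp hy
    rwa [← add_right_cancel hzy]
  refine ⟨hmem a ha, hmem b hb, fun h => hne (by rw [h]), ?_⟩
  intro x hx hbx
  exact hbet (x + c) (Finset.mem_image_of_mem _ hx) ((betw_shift a x b c).mpr hbx)

lemma inv_gap_lt [NeZero N] {S : Finset (Fin N)} (hcard : 3 ≤ S.card) {t : Fin N}
    (ht : t ≠ 0) (hinv : S.image (fun x => x + t) = S) {a b : Fin N}
    (hab : Consec N S a b) : 2 * gap N a b < N := by
  have hN : 0 < N := Fin.pos a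
  by_contra hge
  push_neg at hge
  set g := gap N a b with hgdef
  obtain ⟨ha, hb, hne, hbet⟩ := hab
  have hab' : Consec N S (a + t) (b + t) := by
    have := consec_image (c := t) ⟨ha, hb, hne, hbet⟩
    rwa [hinv] at this
  have hat : a + t ∈ S := hab'.1
  have hna : a + t ≠ a := by
    intro h
    exact ht (by rwa [← add_right_inj a, add_zero])
  have hα : 0 < gap N a (a + t) := gap_pos hN (Ne.symm hna)
  set α := gap N a (a + t) with hαdef
  have hαlt := gap_lt hN a (a + t)
  have h1 : ¬ Betw N a (a + t) b := hbet (a + t) hat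
  have hαge : g ≤ α := by
    unfold Betw at h1; push_neg at h1
    have := h1 hα; omega
  have h2 : ¬ Betw N (a + t) a (b + t) := hab'.2.2.2 a ha
  have hrev : α + gap N (a + t) a = N := gap_rev hN (Ne.symm hna)
  have hshift : gap N (a + t) (b + t) = g := gap_shift a b t
  have hαle : α ≤ N - g := by
    unfold Betw at h2; push_neg at h2
    have := h2 (by omega)
    omega
  have hgα : α = g ∧ N = 2 * g := by
    have hglt := gap_lt hN a b
    constructor <;> omega
  have hba : a + t = b := gap_left_inj hN (hgα.1 : gap N a (a + t) = g)
  -- b + t = a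
  have hbt : b + t = a := by
    have e1 := add_gap a b
    have e2 := add_gap b (b + t)
    have e3 : gap N b (b + t) = g := by
      have := gap_shift a (a + t) (b - a)
      have hrw1 : a + (b - a) = b := by abel
      have hrw2 : a + t + (b - a) = b + t := by abel
      rw [hrw1, hrw2] at this
      omega
    apply Fin.ext
    rw [← e2, e3, ← e1, Nat.mod_add_mod]
    have : a.val + g + g = a.val + N := by omega
    rw [this, Nat.add_mod_right, Nat.mod_eq_of_lt a.isLt]
  have hba' : Consec N S b a := by rwa [hba, hbt] at hab'
  -- third vertex
  have hx : ∃ x ∈ S, x ≠ a ∧ x ≠ b := by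
    by_contra hno
    push_neg at hno
    have hsub : S ⊆ {a, b} := by
      intro x hxS
      by_cases hxa : x = a
      · simp [hxa]
      · simp [hno x hxS hxa]
    have hcle := Finset.card_le_card hsub
    have h2 : ({a, b} : Finset (Fin N)).card ≤ 2 := by
      have := Finset.card_insert_le a ({b} : Finset (Fin N))
      simpa using this
    omega
  obtain ⟨x, hxS, hxa, hxb⟩ := hx
  have hgx : 0 < gap N a x := gap_pos hN (Ne.symm hxa)
  have hgxlt := gap_lt hN a x
  have hgxne : gap N a x ≠ g := fun h => hxb (gap_left_inj hN h)
  rcases Nat.lt_or_ge (gap N a x) g with hlt | hge2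
  · exact hbet x hxS ⟨hgx, hlt⟩
  · have h5 : gap N b x = gap N a x - g := gap_add_of_le (by omega)
    have h6 : gap N b a = N - g := by
      have := gap_rev hN hne; omega
    exact hba'.2.2.2 x hxS ⟨by omega, by omega⟩

end Structure

section Escape
variable {N : ℕ}

lemma escape_half [NeZero N] {S : Finset (Fin N)} (hSne : S.Nonempty) {t : Fin N}
    (ht : t ≠ 0) (hinv : S.image (fun x => x + t) = S) {a : Fin N} {g : ℕ}
    (hall : ∀ x ∈ S, gap N a x ≤ g) : N ≤ g + t.val := by
  have hN : 0 < N := Fin.pos a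
  obtain ⟨x, hx, hmax⟩ := Finset.exists_max_image S (fun y => gap N a y) hSne
  have hxt : x + t ∈ S := by rw [← hinv]; exact Finset.mem_image_of_mem _ hx
  have h1 : gap N a (x + t) ≤ gap N a x := hmax _ hxt
  have hform : gap N a (x + t) = (gap N a x + t.val) % N := gap_add_val a x t
  have ht' : 0 < t.val := Nat.pos_of_ne_zero (fun h => ht (Fin.ext h))
  have hgx : gap N a x ≤ g := hall x hx
  rcases Nat.lt_or_ge (gap N a x + t.val) N with hlt | hge
  · rw [Nat.mod_eq_of_lt hlt] at hform; omega
  · omega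

lemma exists_gap_gt [NeZero N] {S : Finset (Fin N)} (hSne : S.Nonempty) {t : Fin N}
    (ht : t ≠ 0) (hinv : S.image (fun x => x + t) = S) {a : Fin N} {g : ℕ}
    (hg : 2 * g < N) : ∃ w ∈ S, g < gap N a w := by
  by_contra hno
  push_neg at hno
  have h1 := escape_half hSne ht hinv hno
  have hinv' : S.image (fun x => x + (-t)) = S := by
    have h := congrArg (Finset.image (fun x => x + (-t))) hinv
    rw [Finset.image_image] at h
    have hfun : ((fun x => x + (-t)) ∘ (fun x : Fin N => x + t)) = id := by
      funext y; simp [add_assoc]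
    rw [hfun, Finset.image_id] at h
    exact h.symm
  have h2 := escape_half hSne (neg_ne_zero.mpr ht) hinv' hno
  have h3 := val_neg_of_ne ht
  have h4 := t.isLt
  have h5 : 0 < t.val := Nat.pos_of_ne_zero (fun h => ht (Fin.ext h))
  omega

end Escape

section Unique
variable {N : ℕ}

lemma unique_aux [NeZero N] {T : Finset (Sym2 (Fin N))} (hT : IsDissection N T)
    {t : Fin N} (ht : t ≠ 0) {S S' : Finset (Fin N)} (hS : IsFace N T S)
    (hS' : IsFace N T S') (hi : S.image (fun x => x + t) = S)
    (hi' : S'.image (fun x => x + t) = S') {v : Fin N} (hv' : v ∈ S') (hv : v ∉ S) :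
    False := by
  have hN : 0 < N := Fin.pos v
  obtain ⟨hc3, hsides, hdiag⟩ := hS
  obtain ⟨hc3', hsides', hdiag'⟩ := hS'
  obtain ⟨a, b, hab, hbet⟩ := exists_consec_betw hN (by omega) hv
  set g := gap N a b with hgdef
  have hbets := hab.2.2.2
  have h2g : 2 * g < N := inv_gap_lt hc3 ht hi hab
  obtain ⟨hgav1, hgav2⟩ := hbet
  have hg2 : 2 ≤ g := by omega
  have hgrev : g + gap N b a = N := gap_rev hN hab.2.2.1
  have habT : s(a, b) ∈ T := by
    rcases hsides a b hab with h1 | h1 | h1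
    · omega
    · omega
    · exact h1
  have hS'ne : S'.Nonempty := ⟨v, hv'⟩
  obtain ⟨w, hw, hgw⟩ := exists_gap_gt (a := a) hS'ne ht hi' h2g
  have hwlt : gap N a w < N := gap_lt hN a w
  by_cases hcase : a ∈ S' ∧ b ∈ S'
  · exact (hdiag' a b hcase.1 hcase.2 habT).2.2.2 v hv' ⟨hgav1, hgav2⟩
  · have hvfilter : v ∈ S'.filter (fun x => 0 < gap N a x ∧ gap N a x < g) :=
      Finset.mem_filter.mpr ⟨hv', hgav1, hgav2⟩
    have hfne : (S'.filter (fun x => 0 < gap N a x ∧ gap N a x < g)).Nonempty := ⟨v, hvfilter⟩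
    rcases not_and_or.mp hcase with ha' | hb'
    · -- a ∉ S' : predecessor argument
      obtain ⟨c, hcf, hcmin⟩ := Finset.exists_min_image _ (fun x => gap N a x) hfne
      have hcS' : c ∈ S' := (Finset.mem_filter.mp hcf).1
      obtain ⟨hgac1, hgac2⟩ := (Finset.mem_filter.mp hcf).2
      obtain ⟨p, hpc⟩ := exists_pred hN hcS' (by omega)
      have hpS' : p ∈ S' := hpc.1
      have hnepc : p ≠ c := hpc.2.2.1
      have hgaplt : gap N a p < N := gap_lt hN a p
      have hne1 : ¬ (0 < gap N a p ∧ gap N a p < g) := by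
        rintro ⟨hp1, hp2⟩
        have hpf : p ∈ S'.filter (fun x => 0 < gap N a x ∧ gap N a x < g) :=
          Finset.mem_filter.mpr ⟨hpS', hp1, hp2⟩
        have hle := hcmin p hpf
        have hnegp : gap N a c ≠ gap N a p := fun h => hnepc (gap_left_inj hN h).symm
        have hgt : gap N a c < gap N a p := by omega
        have h3 : gap N p w = gap N a w - gap N a p := gap_add_of_le (a := a) (by omega)
        have h4 : gap N p c = N - gap N a p + gap N a c := gap_add_of_gt hgt
        exact hpc.2.2.2 w hw ⟨by omega, by omega⟩
      have hpa : p ≠ a := fun h => ha' (h ▸ hpS')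
      have hpb : p ≠ b := by
        rintro rfl
        have h3 : gap N p w = gap N a w - g := gap_add_of_le (a := a) (by omega)
        have h4 : gap N p c = N - g + gap N a c := gap_add_of_gt (a := a) (by omega)
        exact hpc.2.2.2 w hw ⟨by omega, by omega⟩
      have hgap1 : 0 < gap N a p := gap_pos hN (Ne.symm hpa)
      have hgapne : gap N a p ≠ g := fun h => hpb (gap_left_inj hN (h ▸ rfl : gap N a p = gap N a b))
      have hgapg : g < gap N a p := by omega
      have hgcp : gap N c p = gap N a p - gap N a c := gap_add_of_le (a := a) (by omega)
      have hgpc : gap N p c = N - gap N c p := by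
        have := gap_rev hN (Ne.symm hnepc); omega
      have hpcT : s(p, c) ∈ T := by
        rcases hsides' p c hpc with h1 | h1 | h1
        · omega
        · omega
        · exact h1
      have hnee : s(a, b) ≠ s(p, c) := by
        intro h
        rw [Sym2.eq_iff] at h
        rcases h with ⟨h1, h2⟩ | ⟨h1, h2⟩
        · exact hpa (h1.symm)
        · rw [← h1, gap_self hN] at hgac1; omega
      have hgbp : gap N b p = gap N a p - g := gap_add_of_le (a := a) (by omega)
      have hcross : Crossing N s(a, b) s(p, c) :=
        ⟨a, b, c, p, rfl, Sym2.eq_swap.symm, ⟨hgac1, hgac2⟩, ⟨by omega, by omega⟩⟩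
      exact hT.2 _ habT _ hpcT hnee hcross
    · -- b ∉ S' : successor argument
      obtain ⟨c, hcf, hcmax⟩ := Finset.exists_max_image _ (fun x => gap N a x) hfne
      have hcS' : c ∈ S' := (Finset.mem_filter.mp hcf).1
      obtain ⟨hgac1, hgac2⟩ := (Finset.mem_filter.mp hcf).2
      obtain ⟨e, hce⟩ := exists_succ hN hcS' (by omega)
      have heS' : e ∈ S' := hce.2.1
      have hnece : c ≠ e := hce.2.2.1
      have hgaelt : gap N a e < N := gap_lt hN a e
      have hcw : gap N c w = gap N a w - gap N a c := gap_add_of_le (a := a) (by omega)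
      have hne1 : ¬ (0 < gap N a e ∧ gap N a e < g) := by
        rintro ⟨he1, he2⟩
        have hef : e ∈ S'.filter (fun x => 0 < gap N a x ∧ gap N a x < g) :=
          Finset.mem_filter.mpr ⟨heS', he1, he2⟩
        have hle := hcmax e hef
        have hnegp : gap N a e ≠ gap N a c := fun h => hnece (gap_left_inj hN h).symm
        have hlt2 : gap N a e < gap N a c := by omega
        have h4 : gap N c e = N - gap N a c + gap N a e := gap_add_of_gt hlt2
        exact hce.2.2.2 w hw ⟨by omega, by omega⟩
      have hea : e ≠ a := by
        intro h
        have hac : a ≠ c := fun hh => by rw [← hh, gap_self hN] at hgac1; omega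
        have h4 : gap N c e = N - gap N a c := by
          rw [h]
          have := gap_rev hN hac; omega
        exact hce.2.2.2 w hw ⟨by omega, by omega⟩
      have heb : e ≠ b := fun h => hb' (h ▸ heS')
      have hgae1 : 0 < gap N a e := gap_pos hN (Ne.symm hea)
      have hgaene : gap N a e ≠ g := fun h => heb (gap_left_inj hN (h ▸ rfl : gap N a e = gap N a b))
      have hgaeg : g < gap N a e := by omega
      have hgce : gap N c e = gap N a e - gap N a c := gap_add_of_le (a := a) (by omega)
      have hgec : gap N e c = N - gap N c e := by
        have := gap_rev hN hnece; omega
      have hceT : s(c, e) ∈ T := by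
        rcases hsides' c e hce with h1 | h1 | h1
        · omega
        · omega
        · exact h1
      have hnee : s(a, b) ≠ s(c, e) := by
        intro h
        rw [Sym2.eq_iff] at h
        rcases h with ⟨h1, h2⟩ | ⟨h1, h2⟩
        · rw [← h1] at hgac1
          rw [gap_self hN] at hgac1; omega
        · rw [← h2] at hgac2; omega
      have hgbe : gap N b e = gap N a e - g := gap_add_of_le (a := a) (by omega)
      have hcross : Crossing N s(a, b) s(c, e) :=
        ⟨a, b, c, e, rfl, rfl, ⟨hgac1, hgac2⟩, ⟨by omega, by omega⟩⟩
      exact hT.2 _ habT _ hceT hnee hcross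

lemma unique_inv_face [NeZero N] {T : Finset (Sym2 (Fin N))} (hT : IsDissection N T)
    {t : Fin N} (ht : t ≠ 0) {S S' : Finset (Fin N)} (hS : IsFace N T S)
    (hS' : IsFace N T S') (hi : S.image (fun x => x + t) = S)
    (hi' : S'.image (fun x => x + t) = S') : S = S' := by
  by_contra hne
  by_cases hcase : ∃ v ∈ S', v ∉ S
  · obtain ⟨v, hv', hv⟩ := hcase
    exact unique_aux hT ht hS hS' hi hi' hv' hv
  · push_neg at hcase
    have hsub : S' ⊆ S := hcase
    have : ∃ v ∈ S, v ∉ S' := by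
      by_contra hno
      push_neg at hno
      exact hne (Finset.Subset.antisymm (fun x hx => hno x hx) hsub)
    obtain ⟨v, hv, hv'⟩ := this
    exact unique_aux hT ht hS' hS hi' hi hv hv'

end Unique

section Transport
variable {N : ℕ}

lemma mem_T_shift {T : Finset (Sym2 (Fin N))} {c : Fin N}
    (hsym : T.image (Sym2.map (fun x => x + c)) = T) (a b : Fin N) :
    s(a, b) ∈ T ↔ s(a + c, b + c) ∈ T := by
  have hinj : Function.Injective (fun x : Fin N => x + c) := add_left_injective c
  constructor
  · intro h
    have h2 : Sym2.map (fun x => x + c) s(a, b) ∈ T.image (Sym2.map (fun x => x + c)) :=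
      Finset.mem_image_of_mem _ h
    rw [hsym, Sym2.map_pair_eq] at h2
    exact h2
  · intro h
    rw [← hsym] at h
    obtain ⟨e, heT, he⟩ := Finset.mem_image.mp h
    have heq : e = s(a, b) := by
      apply Sym2.map.injective hinj
      rw [he, Sym2.map_pair_eq]
    rwa [heq] at heT

lemma isSide_shift {T : Finset (Sym2 (Fin N))} {c : Fin N}
    (hsym : T.image (Sym2.map (fun x => x + c)) = T) {a b : Fin N}
    (h : IsSide N T a b) : IsSide N T (a + c) (b + c) := by
  unfold IsSide at h ⊢
  rw [gap_shift, gap_shift]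
  rcases h with h | h | h
  · exact Or.inl h
  · exact Or.inr (Or.inl h)
  · exact Or.inr (Or.inr ((mem_T_shift hsym a b).1 h))

lemma face_shift {T : Finset (Sym2 (Fin N))} {c : Fin N}
    (hsym : T.image (Sym2.map (fun x => x + c)) = T) {S : Finset (Fin N)}
    (hS : IsFace N T S) : IsFace N T (S.image (fun x => x + c)) := by
  have hinj : Function.Injective (fun x : Fin N => x + c) := add_left_injective c
  obtain ⟨h3, hs, hd⟩ := hS
  refine ⟨?_, ?_, ?_⟩
  · rwa [Finset.card_image_of_injective _ hinj]
  · intro a' b' hcons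
    obtain ⟨a, haS, rfl⟩ := Finset.mem_image.mp hcons.1
    obtain ⟨b, hbS, rfl⟩ := Finset.mem_image.mp hcons.2.1
    exact isSide_shift hsym (hs a b (consec_of_image hcons))
  · intro a' b' ha' hb' hTm
    obtain ⟨a, haS, rfl⟩ := Finset.mem_image.mp ha'
    obtain ⟨b, hbS, rfl⟩ := Finset.mem_image.mp hb'
    exact consec_image (hd a b haS hbS ((mem_T_shift hsym a b).2 hTm))

lemma sym_smul [NeZero N] {T : Finset (Sym2 (Fin N))} {t : Fin N}
    (hsym : T.image (Sym2.map (fun x => x + t)) = T) (m : ℕ) :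
    T.image (Sym2.map (fun x => x + m • t)) = T := by
  induction m with
  | zero =>
    have h1 : (fun x : Fin N => x + (0 : ℕ) • t) = id := by funext x; simp
    rw [h1, Sym2.map_id, Finset.image_id]
  | succ k ih =>
    have hfun : (fun x : Fin N => x + (k + 1) • t)
        = (fun x => x + t) ∘ (fun x => x + k • t) := by
      funext x
      show x + (k + 1) • t = (x + k • t) + t
      rw [succ_nsmul, ← add_assoc]
    have h2 : Sym2.map ((fun x : Fin N => x + t) ∘ (fun x => x + k • t))
        = (Sym2.map (fun x : Fin N => x + t)) ∘ (Sym2.map (fun x : Fin N => x + k • t)) := by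
      funext z
      exact (Sym2.map_map z).symm
    rw [hfun, h2, ← Finset.image_image, ih, hsym]

lemma image_iterate [NeZero N] (t : Fin N) (S : Finset (Fin N)) (m : ℕ) :
    (fun X : Finset (Fin N) => X.image (fun x => x + t))^[m] S
      = S.image (fun x => x + m • t) := by
  induction m with
  | zero =>
    have h1 : (fun x : Fin N => x + (0 : ℕ) • t) = id := by funext x; simp
    rw [Function.iterate_zero_apply, h1, Finset.image_id]
  | succ k ih =>
    rw [Function.iterate_succ_apply', ih, Finset.image_image]
    congr 1
    funext x
    show (x + k • t) + t = x + (k + 1) • t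
    rw [succ_nsmul, ← add_assoc]

end Transport

section Counting

lemma card_modEq_fixed {α : Type*} [DecidableEq α] (d : ℕ) (hd0 : 0 < d) (f : α → α)
    (X : Finset α) :
    (∀ x ∈ X, f x ∈ X) → (∀ x ∈ X, f^[d] x = x) →
    (∀ x ∈ X, ∀ m, 0 < m → m < d → f^[m] x = x → f x = x) →
    X.card ≡ (X.filter (fun x => f x = x)).card [MOD d] := by
  induction X using Finset.strongInduction with
  | _ X ih =>
    intro hcl hd hreg
    by_cases hfix : ∀ x ∈ X, f x = x
    · rw [Finset.filter_true_of_mem hfix]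
    · push_neg at hfix
      obtain ⟨x, hx, hfx⟩ := hfix
      have hinj : ∀ u ∈ X, ∀ v ∈ X, f u = f v → u = v := by
        intro u hu v hv h
        have hd1 : d - 1 + 1 = d := by omega
        calc u = f^[d] u := (hd u hu).symm
          _ = f^[d-1+1] u := by rw [hd1]
          _ = f^[d-1] (f u) := Function.iterate_succ_apply f _ u
          _ = f^[d-1] (f v) := by rw [h]
          _ = f^[d-1+1] v := (Function.iterate_succ_apply f _ v).symm
          _ = f^[d] v := by rw [hd1]
          _ = v := hd v hv
      have hiter : ∀ m : ℕ, f^[m] x ∈ X := by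
        intro m
        induction m with
        | zero => exact hx
        | succ k ihk => rw [Function.iterate_succ_apply']; exact hcl _ ihk
      have key : ∀ i j : ℕ, i < j → j < d → f^[i] x ≠ f^[j] x := by
        intro i j hij hjd h
        apply hfx
        have h1 : f^[(d - j) + j] x = x := by
          rw [Nat.sub_add_cancel (le_of_lt hjd)]; exact hd x hx
        have h2 : f^[(d - j) + i] x = x := by
          calc f^[(d-j)+i] x = f^[d-j] (f^[i] x) := Function.iterate_add_apply f _ _ x
            _ = f^[d-j] (f^[j] x) := by rw [h]
            _ = f^[(d-j)+j] x := (Function.iterate_add_apply f _ _ x).symm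
            _ = x := h1
        exact hreg x hx _ (by omega) (by omega) h2
      set O : Finset α := (Finset.range d).image (fun m => f^[m] x) with hOdef
      have hOX : O ⊆ X := by
        intro z hz
        obtain ⟨m, _, rfl⟩ := Finset.mem_image.mp hz
        exact hiter m
      have hcardO : O.card = d := by
        rw [hOdef, Finset.card_image_of_injOn, Finset.card_range]
        intro i hi j hj h
        rw [Finset.mem_coe, Finset.mem_range] at hi hj
        by_contra hne
        rcases Ne.lt_or_gt hne with hlt | hlt
        · exact key i j hlt hj h
        · exact key j i hlt hi h.symm
      have hxO : x ∈ O := by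
        apply Finset.mem_image.mpr
        exact ⟨0, Finset.mem_range.mpr hd0, rfl⟩
      have hssub : X \ O ⊂ X := Finset.sdiff_ssubset hOX ⟨x, hxO⟩
      have hcl' : ∀ y ∈ X \ O, f y ∈ X \ O := by
        intro y hy
        rw [Finset.mem_sdiff] at hy
        rw [Finset.mem_sdiff]
        refine ⟨hcl y hy.1, ?_⟩
        intro hfyO
        apply hy.2
        obtain ⟨m, hm, hfy⟩ := Finset.mem_image.mp hfyO
        rw [Finset.mem_range] at hm
        rcases Nat.eq_zero_or_pos m with rfl | hmpos
        · -- f y = x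
          have hx2 : f (f^[d-1] x) = x := by
            have h5 : f^[d-1+1] x = f (f^[d-1] x) := Function.iterate_succ_apply' f _ x
            rw [← h5, Nat.sub_add_cancel (by omega : 1 ≤ d)]
            exact hd x hx
          have : y = f^[d-1] x := hinj y hy.1 _ (hiter _) (by rw [hx2]; simpa using hfy.symm)
          rw [this]
          exact Finset.mem_image.mpr ⟨d-1, Finset.mem_range.mpr (by omega), rfl⟩
        · have hm1 : m - 1 + 1 = m := by omega
          have : y = f^[m-1] x := by
            apply hinj y hy.1 _ (hiter _)
            have h5 : f^[m-1+1] x = f (f^[m-1] x) := Function.iterate_succ_apply' f _ x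
            rw [← h5, hm1]
            exact hfy.symm
          rw [this]
          exact Finset.mem_image.mpr ⟨m-1, Finset.mem_range.mpr (by omega), rfl⟩
      have hnofix : ∀ z ∈ O, f z ≠ z := by
        intro z hzO hz
        apply hfx
        obtain ⟨m, hm, rfl⟩ := Finset.mem_image.mp hzO
        rw [Finset.mem_range] at hm
        have hfixiter : ∀ k : ℕ, f^[k] (f^[m] x) = f^[m] x := by
          intro k
          induction k with
          | zero => rfl
          | succ k ihk => rw [Function.iterate_succ_apply', ihk, hz]
        have hxz : x = f^[m] x := by
          conv_lhs => rw [← hd x hx]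
          have hdm : d = (d - m) + m := by omega
          rw [hdm, Function.iterate_add_apply, hfixiter]
        rw [← hxz] at hz
        exact hz
      have hfilter : (X \ O).filter (fun z => f z = z) = X.filter (fun z => f z = z) := by
        ext z
        simp only [Finset.mem_filter, Finset.mem_sdiff]
        constructor
        · rintro ⟨⟨h1, _⟩, h2⟩
          exact ⟨h1, h2⟩
        · rintro ⟨h1, h2⟩
          exact ⟨⟨h1, fun hzO => hnofix z hzO h2⟩, h2⟩
      have hcard : X.card = (X \ O).card + d := by
        rw [Finset.card_sdiff_of_subset hOX, hcardO]
        have := Finset.card_le_card hOX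
        omega
      have hIH := ih (X \ O) hssub hcl'
        (fun y hy => hd y (Finset.mem_sdiff.mp hy).1)
        (fun y hy => hreg y (Finset.mem_sdiff.mp hy).1)
      rw [hcard, ← hfilter]
      calc (X \ O).card + d ≡ (X \ O).card + 0 [MOD d] :=
            Nat.ModEq.add_left _ (Nat.modEq_zero_iff_dvd.mpr dvd_rfl)
        _ = (X \ O).card := by omega
        _ ≡ ((X \ O).filter (fun z => f z = z)).card [MOD d] := hIH

end Counting


open Fin.NatCast

/-- if `d ∣ n+2`, `d > 1`, and `μ` satisfies neither
(i) exactly one index `j` with `μ_j ≡ 1 (mod d)` and all other `μ_i ≡ 0 (mod d)`, nor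
(ii) `d = 2` with all `μ_i` even, then no dissection of type `μ` of the `(n+2)`-gon is
invariant under rotation by `2π/d` (i.e. by `(n+2)/d` vertex positions). -/
theorem stmt5 (n k d : ℕ) (μ : Fin n → ℕ)
    (hk : k = ∑ i, μ i) (hn : n = ∑ i, (i.val + 1) * μ i)
    (hd : d ∣ n + 2) (hd1 : 1 < d)
    (hnot : ¬ ((∃ j : Fin n, μ j % d = 1 ∧ ∀ i : Fin n, i ≠ j → μ i % d = 0) ∨
        (d = 2 ∧ ∀ i : Fin n, μ i % 2 = 0))) :
    Nat.card {T : Finset (Sym2 (Fin (n + 2))) //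
        IsDissection (n + 2) T ∧ HasType (n + 2) n T μ ∧
        T.image (Sym2.map (fun x : Fin (n + 2) => x + (Fin.ofNat (n + 2) ((n + 2) / d : ℕ)))) = T}
      = 0 := by
  have hd0 : 0 < d := by omega
  rcases Nat.eq_zero_or_pos n with hn0 | hnpos
  · subst hn0
    have hd2 : d = 2 := by
      have h2 := Nat.le_of_dvd (by norm_num) hd
      omega
    exact absurd (Or.inr ⟨hd2, fun i => i.elim0⟩) hnot
  · rw [Nat.card_eq_zero]
    left
    constructor
    rintro ⟨T, hdis, htype, hsym⟩
    set q : ℕ := (n + 2) / d with hq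
    have hqd : d * q = n + 2 := Nat.mul_div_cancel' hd
    have hqpos : 0 < q := by
      rcases Nat.eq_zero_or_pos q with h0 | h
      · rw [h0, Nat.mul_zero] at hqd; omega
      · exact h
    have hqlt : q < n + 2 := by
      have h2q : 2 * q ≤ d * q := Nat.mul_le_mul_right q (by omega)
      omega
    set t : Fin (n + 2) := Fin.ofNat (n + 2) q with ht
    have htval : t.val = q := by
      rw [ht, Fin.val_ofNat, Nat.mod_eq_of_lt hqlt]
    have ht0 : t ≠ 0 := by
      intro h
      rw [h, Fin.val_zero] at htval
      omega
    have hsmul_val : ∀ m : ℕ, m • t = ((m * q : ℕ) : Fin (n + 2)) := by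
      intro m
      induction m with
      | zero => simp
      | succ k ih =>
        rw [succ_nsmul, ih, ht, Fin.ofNat_eq_cast, ← Nat.cast_add]
        congr 1
        ring
    have hdt : d • t = 0 := by
      rw [hsmul_val, hqd, Fin.natCast_self]
    have hmt : ∀ m : ℕ, 0 < m → m < d → m • t ≠ 0 := by
      intro m hm1 hm2 h
      have hlt : m * q < n + 2 := by
        have h1 := Nat.mul_le_mul_right q (show m + 1 ≤ d by omega)
        have h3 : (m + 1) * q = m * q + q := by ring
        omega
      have hval : (m • t).val = m * q := by
        rw [hsmul_val, Fin.val_natCast, Nat.mod_eq_of_lt hlt]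
      rw [h, Fin.val_zero] at hval
      have := Nat.mul_pos hm1 hqpos
      omega
    set F : Finset (Fin (n + 2)) → Finset (Fin (n + 2)) :=
      fun S => S.image (fun x => x + t) with hF
    have hFface : ∀ {S}, IsFace (n+2) T S → IsFace (n+2) T (F S) :=
      fun hS => face_shift hsym hS
    have hFcard : ∀ S : Finset (Fin (n+2)), (F S).card = S.card :=
      fun S => Finset.card_image_of_injective _ (add_left_injective t)
    have hFiter : ∀ (S : Finset (Fin (n+2))) (m : ℕ),
        F^[m] S = S.image (fun x => x + m • t) :=
      fun S m => image_iterate t S m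
    have hcount : ∀ i : Fin n,
        μ i ≡ ((Finset.univ.filter
            (fun S : Finset (Fin (n+2)) => IsFace (n+2) T S ∧ S.card = i.val + 3)).filter
          (fun S => F S = S)).card [MOD d] := by
      intro i
      have hμ : μ i = (Finset.univ.filter
          (fun S : Finset (Fin (n+2)) => IsFace (n+2) T S ∧ S.card = i.val + 3)).card := by
        rw [← htype i, faceCount, Nat.card_eq_fintype_card, Fintype.card_subtype]
      rw [hμ]
      apply card_modEq_fixed d hd0 F _ ?hcl ?hdit ?hreg
      case hcl =>
        intro S hS
        rw [Finset.mem_filter] at hS ⊢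
        exact ⟨Finset.mem_univ _, hFface hS.2.1, by rw [hFcard]; exact hS.2.2⟩
      case hdit =>
        intro S _
        rw [hFiter, hdt]
        have h0 : (fun x : Fin (n+2) => x + (0 : Fin (n+2))) = id := by funext x; simp
        rw [h0, Finset.image_id]
      case hreg =>
        intro S hS m hm1 hm2 hiter
        rw [Finset.mem_filter] at hS
        have hface := hS.2.1
        rw [hFiter] at hiter
        have hmne := hmt m hm1 hm2
        have hFS : IsFace (n+2) T (F S) := hFface hface
        have hFSinv : (F S).image (fun x => x + m • t) = F S := by
          show (S.image (fun x => x + t)).image (fun x => x + m • t)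
            = S.image (fun x => x + t)
          rw [Finset.image_image]
          have hcomm : ((fun x : Fin (n+2) => x + m • t) ∘ (fun x => x + t))
              = (fun x : Fin (n+2) => x + t) ∘ (fun x => x + m • t) := by
            funext x
            show x + t + m • t = x + m • t + t
            rw [add_assoc, add_assoc, add_comm t (m • t)]
          rw [hcomm, ← Finset.image_image, hiter]
        exact unique_inv_face hdis hmne hFS hface hFSinv hiter
    by_cases hfix : ∃ S₀, IsFace (n+2) T S₀ ∧ F S₀ = S₀
    · obtain ⟨S₀, hS₀f, hS₀x⟩ := hfix
      have hc3 : 3 ≤ S₀.card := hS₀f.1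
      have hcle : S₀.card ≤ n + 2 := by
        have h1 := Finset.card_le_univ S₀
        simpa using h1
      apply hnot
      left
      have hjlt : S₀.card - 3 < n := by omega
      refine ⟨⟨S₀.card - 3, hjlt⟩, ?_, ?_⟩
      · have h1 := hcount ⟨S₀.card - 3, hjlt⟩
        have hfeq : ((Finset.univ.filter
            (fun S : Finset (Fin (n+2)) => IsFace (n+2) T S ∧
              S.card = (⟨S₀.card - 3, hjlt⟩ : Fin n).val + 3)).filter
            (fun S => F S = S)) = {S₀} := by
          ext S
          simp only [Finset.mem_filter, Finset.mem_univ, true_and, Finset.mem_singleton]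
          constructor
          · rintro ⟨⟨hSf, _⟩, hSx⟩
            exact unique_inv_face hdis ht0 hSf hS₀f hSx hS₀x
          · intro h
            rw [h]
            exact ⟨⟨hS₀f, by show S₀.card = S₀.card - 3 + 3; omega⟩, hS₀x⟩
        rw [hfeq, Finset.card_singleton] at h1
        have h2 : μ ⟨S₀.card - 3, hjlt⟩ % d = 1 % d := h1
        rwa [Nat.mod_eq_of_lt hd1] at h2
      · intro i hij
        have h1 := hcount i
        have hfeq : ((Finset.univ.filter
            (fun S : Finset (Fin (n+2)) => IsFace (n+2) T S ∧ S.card = i.val + 3)).filter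
            (fun S => F S = S)) = ∅ := by
          ext S
          simp only [Finset.mem_filter, Finset.mem_univ, true_and,
            Finset.notMem_empty, iff_false]
          rintro ⟨⟨hSf, hScard⟩, hSx⟩
          have hSeq : S = S₀ := unique_inv_face hdis ht0 hSf hS₀f hSx hS₀x
          apply hij
          apply Fin.ext
          show i.val = S₀.card - 3
          rw [← hSeq]
          omega
        rw [hfeq, Finset.card_empty] at h1
        have h2 : μ i % d = 0 % d := h1
        simpa using h2
    · push_neg at hfix
      apply hnot
      right
      have hall : ∀ i : Fin n, μ i % d = 0 := by
        intro i
        have h1 := hcount i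
        have hfeq : ((Finset.univ.filter
            (fun S : Finset (Fin (n+2)) => IsFace (n+2) T S ∧ S.card = i.val + 3)).filter
            (fun S => F S = S)) = ∅ := by
          ext S
          simp only [Finset.mem_filter, Finset.mem_univ, true_and,
            Finset.notMem_empty, iff_false]
          rintro ⟨⟨hSf, _⟩, hSx⟩
          exact hfix S hSf hSx
        rw [hfeq, Finset.card_empty] at h1
        have h2 : μ i % d = 0 % d := h1
        simpa using h2
      have hdvdn : d ∣ n := by
        rw [hn]
        apply Finset.dvd_sum
        intro i _
        exact Dvd.dvd.mul_left (Nat.dvd_of_mod_eq_zero (hall i)) _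
      have hd2' : d ∣ 2 := by
        have h1 := Nat.dvd_sub hd hdvdn
        simpa using h1
      have hd2 : d = 2 := by
        have := Nat.le_of_dvd (by norm_num) hd2'
        omega
      exact ⟨hd2, fun i => by rw [← hd2]; exact hall i⟩
end

section
/- Let f be a positive-integer-valued frieze on the polygon P_n^⋆ with one interior orbifold point of order 3 (n ≥ 1). Then f is unitary: there exists a unique triangulation T of P_n^⋆ such that f(τ) = 1 for every arc τ ∈ T. -/
/- Arcs on the orbifold polygon `P_n^⋆` (one interior orbifold point `⋆`) are encoded
as ordered pairs `(i, j)`: for `i ≠ j` the standard arc from `i` clockwise to `j`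
(with `⋆` on the other side), and `(i, i)` the pending arc at `i` cutting out a monogon
containing `⋆`. The pair `(i, i+1)` encodes a boundary segment. -/

/-- Clockwise distance from `i` to `j`. -/
def ogap (n : ℕ) (i j : Fin n) : ℕ := (j.val + n - i.val) % n

/-- The clockwise length of the arc `(i, j)` (`n` for a pending arc). -/
def olen (n : ℕ) (i j : Fin n) : ℕ := if i = j then n else (j.val + n - i.val) % n

/-- `(i, j)` is a genuine arc (not isotopic to a boundary segment). -/
def OValid (n : ℕ) (a : Fin n × Fin n) : Prop := 2 ≤ olen n a.1 a.2

/-- Two arcs of `P_n^⋆` cross (computed via their lifts to the universal cover). -/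
def OCross (n : ℕ) (a b : Fin n × Fin n) : Prop :=
  (0 < ogap n a.1 b.1 ∧ ogap n a.1 b.1 < olen n a.1 a.2 ∧
    olen n a.1 a.2 < ogap n a.1 b.1 + olen n b.1 b.2) ∨
  (0 < ogap n b.1 a.1 ∧ ogap n b.1 a.1 < olen n b.1 b.2 ∧
    olen n b.1 b.2 < ogap n b.1 a.1 + olen n a.1 a.2)

/-- A triangulation of `P_n^⋆`: a maximal set of pairwise noncrossing arcs. -/
def IsOTri (n : ℕ) (T : Finset (Fin n × Fin n)) : Prop :=
  (∀ a ∈ T, OValid n a) ∧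
  (∀ a ∈ T, ∀ b ∈ T, a ≠ b → ¬ OCross n a b) ∧
  (∀ a : Fin n × Fin n, OValid n a → a ∉ T → ∃ b ∈ T, OCross n a b)

/-- The lift of `f` to the universal cover: `liftF f a b` is the value of `f` on the
arc whose lift joins positions `a` and `b`; in particular `liftF f a (a + n)` is the
value on the pending arc at `a` and `liftF f a (a+1)` is a boundary segment. -/
def liftF (n : ℕ) [NeZero n] (f : Fin n × Fin n → ℤ) (a b : ℤ) : ℤ :=
  f (⟨(a : ZMod n).val, ZMod.val_lt _⟩, ⟨(b : ZMod n).val, ZMod.val_lt _⟩)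

section
variable (n : ℕ) [NeZero n]

lemma npos : 0 < n := Nat.pos_of_ne_zero (NeZero.ne n)

def finZ (z : ℤ) : Fin n :=
  ⟨(z % n).toNat, by
    have h0 : (0:ℤ) < n := by exact_mod_cast npos n
    have h1 : 0 ≤ z % n := Int.emod_nonneg z (by omega)
    have h2 : z % n < n := Int.emod_lt_of_pos z h0
    omega⟩

lemma finZ_val (z : ℤ) : ((finZ n z).val : ℤ) = z % n := by
  have h0 : (0:ℤ) < n := by exact_mod_cast npos n
  have h1 : 0 ≤ z % n := Int.emod_nonneg z (by omega)
  simp [finZ, Int.toNat_of_nonneg h1]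

lemma liftF_eval (f : Fin n × Fin n → ℤ) (a b : ℤ) :
    liftF n f a b = f (finZ n a, finZ n b) := by
  unfold liftF
  congr 1
  refine Prod.ext ?_ ?_ <;> ext <;> simp only []
  · have h1 := ZMod.val_intCast (n := n) a
    have h2 := finZ_val n a
    omega
  · have h1 := ZMod.val_intCast (n := n) b
    have h2 := finZ_val n b
    omega

end

section
variable (n : ℕ) [NeZero n]

lemma finZ_congr {z w : ℤ} (h : z % n = w % n) : finZ n z = finZ n w := by
  have h1 := finZ_val n z
  have h2 := finZ_val n w
  ext; omega

lemma finZ_coe (x : Fin n) : finZ n x.val = x := by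
  have h1 := finZ_val n x.val
  have h2 : (x.val : ℤ) % n = x.val := Int.emod_eq_of_lt (by positivity) (by exact_mod_cast x.isLt)
  ext; omega

lemma finZ_add_n (z : ℤ) : finZ n (z + n) = finZ n z := by
  refine finZ_congr n ?_
  simpa using Int.add_mul_emod_self_left (a := z) (b := (n:ℤ)) (c := 1)

lemma ogap_val (x y : Fin n) :
    ogap n x y = if y.val < x.val then y.val + n - x.val else y.val - x.val := by
  have hx := x.isLt; have hy := y.isLt
  unfold ogap
  split_ifs with h
  · have : y.val + n - x.val < n := by omega
    exact Nat.mod_eq_of_lt this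
  · have he : y.val + n - x.val = (y.val - x.val) + n := by omega
    rw [he, Nat.add_mod_right]
    exact Nat.mod_eq_of_lt (by omega)

lemma olen_val (x y : Fin n) :
    olen n x y = if y.val ≤ x.val then y.val + n - x.val else y.val - x.val := by
  have hx := x.isLt; have hy := y.isLt
  unfold olen
  by_cases hxy : x = y
  · subst hxy; rw [if_pos rfl, if_pos le_rfl]; omega
  · have hvne : x.val ≠ y.val := fun hc => hxy (by ext; omega)
    rw [if_neg hxy]
    split_ifs with h
    · have he : y.val + n - x.val = n - (x.val - y.val) := by omega
      rw [Nat.mod_eq_of_lt (by omega)]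
    · have he : y.val + n - x.val = (y.val - x.val) + n := by omega
      rw [he, Nat.add_mod_right]
      exact Nat.mod_eq_of_lt (by omega)

lemma finZ_add_ogap (z : ℤ) (x y : Fin n) (h : finZ n z = x) :
    finZ n (z + ogap n x y) = y := by
  have hzv : z % n = x.val := by have := finZ_val n z; rw [h] at this; omega
  refine Eq.trans (finZ_congr n (w := (y.val : ℤ)) ?_) (finZ_coe n y)
  have hx := x.isLt; have hy := y.isLt
  rw [ogap_val]
  have key : ∀ w : ℤ, z % n = x.val → (z + w) % n = ((x.val : ℤ) + w) % n := by
    intro w hw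
    have : z ≡ (x.val : ℤ) [ZMOD (n:ℤ)] := by
      unfold Int.ModEq
      rw [hw, Int.emod_eq_of_lt (by positivity) (by exact_mod_cast hx)]
    exact (this.add_right w)
  split_ifs with hlt
  · rw [key _ hzv]
    have : (x.val : ℤ) + (y.val + n - x.val : ℕ) = y.val + n := by push_cast; omega
    rw [this]
    rw [show ((y.val : ℤ) + n) = y.val + n * 1 by ring, Int.add_mul_emod_self_left]
  · rw [key _ hzv]
    have : (x.val : ℤ) + (y.val - x.val : ℕ) = y.val := by push_cast; omega
    rw [this]

lemma finZ_add_olen (z : ℤ) (x y : Fin n) (h : finZ n z = x) :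
    finZ n (z + olen n x y) = y := by
  by_cases hxy : x = y
  · subst hxy
    rw [show olen n x x = n from if_pos rfl]
    rw [finZ_add_n, h]
  · rw [show olen n x y = ogap n x y from if_neg hxy]
    exact finZ_add_ogap n z x y h

end

structure Frz (n : ℕ) [NeZero n] (f : Fin n × Fin n → ℤ) : Prop where
  pos : ∀ p, 0 < f p
  bd : ∀ i, f (i, i + 1) = 1
  ptol : ∀ a b c d : ℤ, a < b → b < c → c < d → d ≤ a + n →
    liftF n f a c * liftF n f b d
      = liftF n f a b * liftF n f c d + liftF n f a d * liftF n f b c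
  pend : ∀ i j, i ≠ j →
    f (i, i) * f (j, j) = f (i, j) ^ 2 + f (i, j) * f (j, i) + f (j, i) ^ 2

section
variable (n : ℕ) [NeZero n]

lemma ogap_lt (x y : Fin n) : ogap n x y < n := by
  rw [ogap_val]; have := x.isLt; have := y.isLt; split_ifs <;> omega

lemma ogap_eq_zero (x y : Fin n) : ogap n x y = 0 ↔ x = y := by
  rw [ogap_val]
  constructor
  · intro h; have := x.isLt; have := y.isLt
    split_ifs at h <;> (ext; omega)
  · intro h; subst h; simp

lemma olen_le (x y : Fin n) : olen n x y ≤ n := by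
  rw [olen_val]; have := x.isLt; have := y.isLt; split_ifs <;> omega

lemma olen_lt_of_ne {x y : Fin n} (h : x ≠ y) : olen n x y < n := by
  have hvne : x.val ≠ y.val := fun hc => h (by ext; omega)
  rw [olen_val]; have := x.isLt; have := y.isLt; split_ifs <;> omega

lemma olen_eq_ogap {x y : Fin n} (h : x ≠ y) : olen n x y = ogap n x y := by
  have hvne : x.val ≠ y.val := fun hc => h (by ext; omega)
  rw [olen_val, ogap_val]; split_ifs <;> omega

lemma ogap_anti {x y : Fin n} (h : x ≠ y) : ogap n y x = n - ogap n x y := by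
  have hvne : x.val ≠ y.val := fun hc => h (by ext; omega)
  rw [ogap_val, ogap_val]; have := x.isLt; have := y.isLt; split_ifs <;> omega

variable {f : Fin n × Fin n → ℤ}

lemma fone (hf : Frz n f) (p : Fin n × Fin n) : 1 ≤ f p := hf.pos p

lemma flf (hf : Frz n f) {z w : ℤ} {x y : Fin n} (hx : finZ n z = x)
    (hy : finZ n w = y) : liftF n f z w = f (x, y) := by
  rw [liftF_eval, hx, hy]

/-- A pending arc at `p`, strictly inside the standard arc `(u,v)`, cannot both
have value 1 with it. -/
lemma pend_in (hf : Frz n f) (p u v : Fin n) (huv : u ≠ v)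
    (h1 : 0 < ogap n u p) (h2 : ogap n u p < olen n u v)
    (fp : f (p, p) = 1) (fuv : f (u, v) = 1) : False := by
  have hpu : p ≠ u := by
    intro h; rw [h, (ogap_eq_zero n u u).2 rfl] at h1; omega
  set A : ℤ := (u.val : ℤ) with hA
  have hfA : finZ n A = u := finZ_coe n u
  have hfB : finZ n (A + ogap n u p) = p := finZ_add_ogap n A u p hfA
  have hfC : finZ n (A + olen n u v) = v := finZ_add_olen n A u v hfA
  have hfAn : finZ n (A + n) = u := by rw [finZ_add_n, hfA]
  have hLa : olen n u v < n := olen_lt_of_ne n huv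
  have rel := hf.ptol A (A + ogap n u p) (A + olen n u v) (A + n)
    (by omega) (by omega) (by omega) le_rfl
  rw [flf n hf hfA hfC, flf n hf hfB hfAn, flf n hf hfA hfB, flf n hf hfC hfAn,
    flf n hf hfA hfAn, flf n hf hfB hfC, fuv] at rel
  have rel2 := hf.pend p u hpu
  rw [fp] at rel2
  have p1 := fone n hf (u, p); have p2 := fone n hf (v, u)
  have p3 := fone n hf (u, u); have p4 := fone n hf (p, v)
  have p5 := fone n hf (p, u)
  nlinarith [sq_nonneg (f (p,u)), sq_nonneg (f (u,p))]

lemma cross_ones_aux (hf : Frz n f) (i j k l : Fin n)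
    (c1 : 0 < ogap n i k) (c2 : ogap n i k < olen n i j)
    (c3 : olen n i j < ogap n i k + olen n k l)
    (ha : f (i, j) = 1) (hb : f (k, l) = 1) : False := by
  have hik : i ≠ k := fun h => by rw [h, (ogap_eq_zero n k k).2 rfl] at c1; omega
  by_cases hij : i = j
  · -- a is pending
    subst hij
    rw [show olen n i i = n from if_pos rfl] at c2 c3
    by_cases hkl : k = l
    · subst hkl
      have rel := hf.pend i k hik
      rw [ha, hb] at rel
      have p1 := fone n hf (i, k); have p2 := fone n hf (k, i)
      nlinarith
    · -- pending i inside (k,l)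
      have hg := ogap_anti n hik
      have hLb := olen_lt_of_ne n hkl
      refine pend_in n hf i k l hkl ?_ ?_ ha hb
      · rw [hg]; have := ogap_lt n i k; omega
      · rw [hg]; omega
  · by_cases hkl : k = l
    · subst hkl
      exact pend_in n hf k i j hij c1 c2 hb ha
    · -- both standard
      have hLa := olen_lt_of_ne n hij
      have hLb := olen_lt_of_ne n hkl
      set A : ℤ := (i.val : ℤ) with hA
      have hfA : finZ n A = i := finZ_coe n i
      have hfB : finZ n (A + ogap n i k) = k := finZ_add_ogap n A i k hfA
      have hfC : finZ n (A + olen n i j) = j := finZ_add_olen n A i j hfA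
      have hfD : finZ n (A + ogap n i k + olen n k l) = l :=
        finZ_add_olen n _ k l hfB
      have hfAn : finZ n (A + n) = i := by rw [finZ_add_n, hfA]
      have hfBn : finZ n (A + ogap n i k + n) = k := by rw [finZ_add_n, hfB]
      by_cases hw : ogap n i k + olen n k l ≤ n
      · -- single window
        have rel := hf.ptol A (A + ogap n i k) (A + olen n i j)
          (A + ogap n i k + olen n k l) (by omega) (by omega) (by omega) (by omega)
        rw [flf n hf hfA hfC, ha] at rel
        rw [show A + ogap n i k + olen n k l = (A + ogap n i k) + olen n k l by ring] at rel
        rw [flf n hf hfB hfD, hb, flf n hf hfA hfB, flf n hf hfC hfD, flf n hf hfA hfD,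
          flf n hf hfB hfC] at rel
        have q1 := mul_pos (hf.pos (i,k)) (hf.pos (j,l))
        have q2 := mul_pos (hf.pos (i,l)) (hf.pos (k,j))
        omega
      · -- double crossing: J1 and J2
        have relJ1 := hf.ptol A (A + ogap n i k) (A + olen n i j) (A + n)
          (by omega) (by omega) (by omega) le_rfl
        rw [flf n hf hfA hfC, ha, flf n hf hfB hfAn, flf n hf hfA hfB, flf n hf hfC hfAn,
          flf n hf hfA hfAn, flf n hf hfB hfC] at relJ1
        have relJ2 := hf.ptol (A + ogap n i k) (A + n) (A + ogap n i k + olen n k l)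
          (A + ogap n i k + n) (by have := ogap_lt n i k; omega) (by omega)
          (by omega) (by omega)
        rw [show A + ogap n i k + olen n k l = (A + ogap n i k) + olen n k l by ring] at relJ2
        rw [flf n hf hfB hfD, hb, flf n hf hfAn hfBn, flf n hf hfB hfAn, flf n hf hfD hfBn,
          flf n hf hfB hfBn, flf n hf hfAn hfD] at relJ2
        -- relJ1 : f(k,i) = f(i,k)*f(j,i) + f(i,i)*f(k,j)
        -- relJ2 : f(i,k) = f(k,i)*f(l,k) + f(k,k)*f(i,l)
        have p1 := fone n hf (i,k); have p2 := fone n hf (j,i)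
        have p3 := fone n hf (i,i); have p4 := fone n hf (k,j)
        have p5 := fone n hf (k,i); have p6 := fone n hf (l,k)
        have p7 := fone n hf (k,k); have p8 := fone n hf (i,l)
        nlinarith
      
lemma noCrossOnes (hf : Frz n f) {a b : Fin n × Fin n} (hx : OCross n a b)
    (ha : f a = 1) (hb : f b = 1) : False := by
  rcases hx with ⟨c1, c2, c3⟩ | ⟨c1, c2, c3⟩
  · exact cross_ones_aux n hf a.1 a.2 b.1 b.2 c1 c2 c3 (by simpa using ha) (by simpa using hb)
  · exact cross_ones_aux n hf b.1 b.2 a.1 a.2 c1 c2 c3 (by simpa using hb) (by simpa using ha)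

end

section
variable (n : ℕ) [NeZero n] {f : Fin n × Fin n → ℤ}

lemma finZ_add_fin (z : ℤ) (k : Fin n) : finZ n (z + k.val) = finZ n z + k := by
  ext
  simp only [Fin.add_def, finZ]
  have hnn : (0:ℤ) ≤ z % n := Int.emod_nonneg z (by exact_mod_cast (npos n).ne')
  have hnn2 : (0:ℤ) ≤ (z + k.val) % n :=
    Int.emod_nonneg _ (by exact_mod_cast (npos n).ne')
  have key : ((((z % n).toNat + k.val) % n : ℕ) : ℤ) = (z + k.val) % n := by
    rw [Int.natCast_mod]
    push_cast
    rw [Int.toNat_of_nonneg hnn]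
    rw [Int.emod_add_emod]
  omega

lemma finZ_add_one (z : ℤ) : finZ n (z + 1) = finZ n z + 1 := by
  have h2 : finZ n (z + ((1 : Fin n).val : ℤ)) = finZ n (z + 1) := by
    apply finZ_congr
    rw [Fin.val_one', Int.natCast_mod]
    push_cast
    rw [add_comm z, Int.emod_add_emod, add_comm]
  rw [← h2, finZ_add_fin]

lemma finZ_sub_one (z : ℤ) : finZ n (z - 1) = finZ n z - 1 := by
  have h := finZ_add_one n (z - 1)
  rw [show z - 1 + 1 = z by ring] at h
  exact eq_sub_of_add_eq h.symm

lemma liftF_pos (hf : Frz n f) (a b : ℤ) : 0 < liftF n f a b := by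
  rw [liftF_eval]; exact hf.pos _

lemma liftF_bd (hf : Frz n f) (z : ℤ) : liftF n f z (z + 1) = 1 := by
  rw [liftF_eval, finZ_add_one]; exact hf.bd _

lemma finZ_zero : finZ n 0 = 0 := by
  ext; simp [finZ]

lemma finZ_n : finZ n (n : ℤ) = 0 := by
  ext; simp [finZ]

lemma exist_one (hf : Frz n f) (hn : 3 ≤ n) : ∃ z : ℤ, liftF n f (z - 1) (z + 1) = 1 := by
  by_contra hc
  push_neg at hc
  have h2 : ∀ z : ℤ, 2 ≤ liftF n f (z - 1) (z + 1) := by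
    intro z
    have := liftF_pos n hf (z - 1) (z + 1)
    have := hc z
    omega
  have hbd1 : ∀ z : ℤ, liftF n f z (z + 1) = 1 := liftF_bd n hf
  -- the chain from 0 to the right
  have dchain : ∀ j : ℤ, 2 ≤ j → j ≤ n → liftF n f 0 (j - 1) + 1 ≤ liftF n f 0 j := by
    refine Int.le_induction ?_ ?_
    · intro _
      have e1 : liftF n f 0 (1 : ℤ) = 1 := by
        have := hbd1 0; norm_num at this; exact this
      have e2 := h2 1
      norm_num at e2 ⊢
      omega
    · intro j hj ih hjn
      have ihj := ih (by omega)
      have rel := hf.ptol 0 (j - 1) j (j + 1) (by omega) (by omega) (by omega) (by omega)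
      have b1 : liftF n f (j - 1) j = 1 := by
        have := hbd1 (j - 1); rw [show j - 1 + 1 = j by ring] at this; exact this
      have b2 : liftF n f j (j + 1) = 1 := hbd1 j
      rw [b1, b2] at rel
      have ha := h2 j
      have hp1 := liftF_pos n hf 0 j
      have hp2 := liftF_pos n hf 0 (j - 1)
      have e : liftF n f 0 (j + 1 - 1) = liftF n f 0 j := by norm_num
      rw [e]
      nlinarith [rel, ha, ihj, hp1, hp2]
  -- the chain ending at n-1 going left
  have cchain : ∀ j : ℤ, 2 ≤ j → j ≤ n → liftF n f (n - 1 - (j - 1)) (n - 1) + 1 ≤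
      liftF n f (n - 1 - j) (n - 1) := by
    refine Int.le_induction ?_ ?_
    · intro _
      have e1 : liftF n f ((n:ℤ) - 1 - (2 - 1)) ((n:ℤ) - 1) = 1 := by
        have := hbd1 ((n:ℤ) - 2)
        rw [show ((n:ℤ) - 2) + 1 = n - 1 by ring] at this
        rw [show ((n:ℤ) - 1 - (2-1)) = n - 2 by ring]
        exact this
      have e2 := h2 ((n:ℤ) - 2)
      rw [show ((n:ℤ) - 2 - 1) = n - 1 - 2 by ring, show ((n:ℤ) - 2 + 1) = n - 1 by ring] at e2
      omega
    · intro j hj ih hjn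
      have ihj := ih (by omega)
      have rel := hf.ptol ((n:ℤ) - 2 - j) ((n:ℤ) - 1 - j) ((n:ℤ) - j) ((n:ℤ) - 1)
        (by omega) (by omega) (by omega) (by omega)
      have b1 : liftF n f ((n:ℤ) - 2 - j) ((n:ℤ) - 1 - j) = 1 := by
        have := hbd1 ((n:ℤ) - 2 - j)
        rw [show ((n:ℤ) - 2 - j) + 1 = n - 1 - j by ring] at this; exact this
      have b2 : liftF n f ((n:ℤ) - 1 - j) ((n:ℤ) - j) = 1 := by
        have := hbd1 ((n:ℤ) - 1 - j)
        rw [show ((n:ℤ) - 1 - j) + 1 = n - j by ring] at this; exact this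
      rw [b1, b2] at rel
      have ha := h2 ((n:ℤ) - 1 - j)
      rw [show ((n:ℤ) - 1 - j - 1) = n - 2 - j by ring,
        show ((n:ℤ) - 1 - j + 1) = n - j by ring] at ha
      have hp1 := liftF_pos n hf ((n:ℤ) - 1 - j) ((n:ℤ) - 1)
      have hp2 := liftF_pos n hf ((n:ℤ) - j) ((n:ℤ) - 1)
      rw [show ((n:ℤ) - 1 - (j + 1 - 1)) = n - 1 - j by ring,
        show ((n:ℤ) - 1 - (j + 1)) = n - 2 - j by ring]
      have hcj : liftF n f ((n:ℤ) - 1 - (j - 1)) ((n:ℤ) - 1) = liftF n f ((n:ℤ) - j) ((n:ℤ) - 1) := by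
        rw [show ((n:ℤ) - 1 - (j - 1)) = n - j by ring]
      rw [hcj] at ihj
      nlinarith [rel, ha, ihj, hp1, hp2]
  -- endpoints
  obtain ⟨i0, hval0⟩ : ∃ i0 : Fin n, i0.val = n - 1 := ⟨⟨n - 1, by omega⟩, rfl⟩
  have hval : ((i0.val : ℕ) : ℤ) = (n:ℤ) - 1 := by omega
  have hfz0 : finZ n 0 = 0 := finZ_zero n
  have hfzn : finZ n (n : ℤ) = 0 := finZ_n n
  have hfzn1 : finZ n ((n:ℤ) - 1) = i0 := by
    have h := finZ_coe n i0
    rwa [hval] at h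
  have hfzm1 : finZ n (-1 : ℤ) = i0 := by
    rw [← hfzn1]
    apply finZ_congr
    calc (-1:ℤ) % n = (-1 + (n:ℤ) * 1) % n := (Int.add_mul_emod_self_left (-1) (n:ℤ) 1).symm
      _ = ((n:ℤ) - 1) % n := by ring_nf
  have hdN := dchain n (by omega) le_rfl
  have hcN := cchain n (by omega) le_rfl
  rw [show ((n:ℤ) - 1 - ((n:ℤ) - 1)) = 0 by ring, show ((n:ℤ) - 1 - (n:ℤ)) = -1 by ring] at hcN
  have ed1 : liftF n f 0 ((n:ℤ)) = f (0, 0) := flf n hf hfz0 hfzn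
  have ed2 : liftF n f 0 ((n:ℤ) - 1) = f (0, i0) := flf n hf hfz0 hfzn1
  have ec1 : liftF n f (-1 : ℤ) ((n:ℤ) - 1) = f (i0, i0) := flf n hf hfzm1 hfzn1
  rw [ed1, ed2] at hdN
  rw [ed2, ec1] at hcN
  have hne : (0 : Fin n) ≠ i0 := by
    intro h
    have h2 : (0 : Fin n).val = i0.val := by rw [h]
    have h3 : (0 : Fin n).val = 0 := rfl
    omega
  have hp := hf.pend 0 i0 hne
  have hb0 : f (i0, 0) = 1 := by
    have hbi := hf.bd i0
    have e : i0 + 1 = 0 := by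
      rw [← hfzn1, ← finZ_add_one, show (n:ℤ) - 1 + 1 = n by ring, hfzn]
    rwa [e] at hbi
  rw [hb0] at hp
  have hD := hf.pos (0, i0)
  nlinarith [hp, hdN, hcN, hD, hf.pos (0,0), hf.pos (i0,i0)]

end

section Rot
variable (n : ℕ) [NeZero n]

def rotP (r : Fin n) (p : Fin n × Fin n) : Fin n × Fin n := (p.1 + r, p.2 + r)

lemma val_add (x r : Fin n) :
    (x + r).val = if x.val + r.val < n then x.val + r.val else x.val + r.val - n := by
  rw [Fin.add_def]
  have hx := x.isLt; have hr := r.isLt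
  split_ifs with h
  · exact Nat.mod_eq_of_lt h
  · show (x.val + r.val) % n = x.val + r.val - n
    have e : (x.val + r.val) % n = ((x.val + r.val - n) + n) % n := by
      congr 1
      omega
    rw [e, Nat.add_mod_right]
    exact Nat.mod_eq_of_lt (by omega)

lemma ogap_rot (x y r : Fin n) : ogap n (x + r) (y + r) = ogap n x y := by
  rw [ogap_val, ogap_val, val_add, val_add]
  have hx := x.isLt; have hy := y.isLt; have hr := r.isLt
  split_ifs <;> omega

lemma olen_rot (x y r : Fin n) : olen n (x + r) (y + r) = olen n x y := by
  rw [olen_val, olen_val, val_add, val_add]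
  have hx := x.isLt; have hy := y.isLt; have hr := r.isLt
  split_ifs <;> omega

lemma ocross_rot (r : Fin n) (a b : Fin n × Fin n) :
    OCross n (rotP n r a) (rotP n r b) ↔ OCross n a b := by
  unfold OCross rotP
  simp only [ogap_rot, olen_rot]

lemma ovalid_rot (r : Fin n) (a : Fin n × Fin n) :
    OValid n (rotP n r a) ↔ OValid n a := by
  unfold OValid rotP
  simp only [olen_rot]

lemma rotP_inv (r : Fin n) (a : Fin n × Fin n) : rotP n r (rotP n (-r) a) = a := by
  unfold rotP
  simp [add_assoc]

lemma rotP_inj (r : Fin n) : Function.Injective (rotP n r) := by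
  intro a b h
  unfold rotP at h
  have h1 := congrArg Prod.fst h
  have h2 := congrArg Prod.snd h
  simp only at h1 h2
  have e1 : a.1 = b.1 := add_right_cancel h1
  have e2 : a.2 = b.2 := add_right_cancel h2
  exact Prod.ext e1 e2

lemma isOTri_rot (r : Fin n) (T : Finset (Fin n × Fin n)) (hT : IsOTri n T) :
    IsOTri n (T.image (rotP n r)) := by
  obtain ⟨h1, h2, h3⟩ := hT
  refine ⟨?_, ?_, ?_⟩
  · intro a ha
    obtain ⟨b, hb, rfl⟩ := Finset.mem_image.1 ha
    exact (ovalid_rot n r b).2 (h1 b hb)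
  · intro a ha b hb hne
    obtain ⟨a', ha', rfl⟩ := Finset.mem_image.1 ha
    obtain ⟨b', hb', rfl⟩ := Finset.mem_image.1 hb
    have hne' : a' ≠ b' := fun h => hne (by rw [h])
    intro hc
    exact h2 a' ha' b' hb' hne' ((ocross_rot n r a' b').1 hc)
  · intro a hva hna
    have hva' : OValid n (rotP n (-r) a) := by
      rw [← rotP_inv n r a] at hva
      exact (ovalid_rot n r _).1 hva
    have hna' : rotP n (-r) a ∉ T := by
      intro hc
      exact hna (Finset.mem_image.2 ⟨_, hc, rotP_inv n r a⟩)
    obtain ⟨b, hb, hcr⟩ := h3 _ hva' hna'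
    refine ⟨rotP n r b, Finset.mem_image_of_mem _ hb, ?_⟩
    have := (ocross_rot n r (rotP n (-r) a) b).2 hcr
    rwa [rotP_inv] at this

variable {f : Fin n × Fin n → ℤ}

lemma liftF_rot (r : Fin n) (a b : ℤ) :
    liftF n (fun p => f (p.1 + r, p.2 + r)) a b = liftF n f (a + r.val) (b + r.val) := by
  rw [liftF_eval, liftF_eval, ← finZ_add_fin, ← finZ_add_fin]

lemma frz_rot (hf : Frz n f) (r : Fin n) : Frz n (fun p => f (p.1 + r, p.2 + r)) := by
  refine ⟨fun p => hf.pos _, ?_, ?_, ?_⟩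
  · intro i
    simp only []
    rw [show i + 1 + r = (i + r) + 1 by rw [add_right_comm]]
    exact hf.bd (i + r)
  · intro a b c d h1 h2 h3 h4
    rw [liftF_rot, liftF_rot, liftF_rot, liftF_rot, liftF_rot, liftF_rot]
    exact hf.ptol _ _ _ _ (by omega) (by omega) (by omega) (by omega)
  · intro i j hne
    simp only []
    exact hf.pend (i + r) (j + r) (fun h => hne (add_right_cancel h))

end Rot

section Del
variable (m : ℕ) [NeZero m]

def eF : Fin m → Fin (m + 1) := fun j => ⟨j.val, by omega⟩

def eP : Fin m × Fin m → Fin (m + 1) × Fin (m + 1) := fun p => (eF m p.1, eF m p.2)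

def x0 : Fin (m + 1) × Fin (m + 1) := (⟨m - 1, by omega⟩, ⟨0, by omega⟩)

lemma eF_val (x : Fin m) : (eF m x).val = x.val := rfl

lemma eP_inj : Function.Injective (eP m) := by
  intro a b h
  have h1 : (eP m a).1.val = (eP m b).1.val := by rw [h]
  have h2 : (eP m a).2.val = (eP m b).2.val := by rw [h]
  simp only [eP, eF_val] at h1 h2
  exact Prod.ext (by ext; exact h1) (by ext; exact h2)

lemma ocross_e (a b : Fin m × Fin m) :
    OCross (m + 1) (eP m a) (eP m b) ↔ OCross m a b := by
  have b1 := a.1.isLt; have b2 := a.2.isLt; have b3 := b.1.isLt; have b4 := b.2.isLt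
  unfold OCross eP eF
  simp only [ogap_val, olen_val, eF_val]
  split_ifs <;> omega

lemma ovalid_e (a : Fin m × Fin m) (h : OValid m a) : OValid (m + 1) (eP m a) := by
  have b1 := a.1.isLt; have b2 := a.2.isLt
  unfold OValid eP eF at *
  simp only [olen_val, eF_val] at *
  split_ifs at * <;> omega

lemma x0_valid (hm : 2 ≤ m) : OValid (m + 1) (x0 m) := by
  unfold OValid x0
  simp only [olen_val]
  split_ifs <;> omega

lemma eP_not_cross_x0 (hm : 2 ≤ m) (a : Fin m × Fin m) :
    ¬ OCross (m + 1) (eP m a) (x0 m) := by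
  have b1 := a.1.isLt; have b2 := a.2.isLt
  unfold OCross eP x0 eF
  simp only [ogap_val, olen_val, eF_val]
  split_ifs <;> omega

lemma endpoint_cross_x0 (hm : 2 ≤ m) (a : Fin (m + 1) × Fin (m + 1))
    (hv : OValid (m + 1) a) (he : a.1.val = m ∨ a.2.val = m) :
    OCross (m + 1) a (x0 m) := by
  have b1 := a.1.isLt; have b2 := a.2.isLt
  unfold OValid at hv
  unfold OCross x0
  simp only [ogap_val, olen_val] at *
  split_ifs at * <;> omega

end Del

section Del2
variable (m : ℕ) [NeZero m] [NeZero (m + 1)]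

def phi (z : ℤ) : ℤ := z + z / m

lemma phi_mono {a b : ℤ} (h : a ≤ b) : phi m a ≤ phi m b := by
  unfold phi
  have : a / m ≤ b / m := Int.ediv_le_ediv (by exact_mod_cast npos m) h
  omega

lemma phi_smono {a b : ℤ} (h : a < b) : phi m a < phi m b := by
  unfold phi
  have : a / m ≤ b / m := Int.ediv_le_ediv (by exact_mod_cast npos m) h.le
  omega

lemma phi_shift (a : ℤ) : phi m (a + m) = phi m a + (m + 1) := by
  unfold phi
  have h : (a + m) / m = a / m + 1 := by
    have := Int.add_mul_ediv_right a 1 (by exact_mod_cast (npos m).ne' : (m:ℤ) ≠ 0)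
    simpa using this
  omega

lemma phi_lift (z : ℤ) : finZ (m + 1) (phi m z) = eF m (finZ m z) := by
  have hm : (0:ℤ) < m := by exact_mod_cast npos m
  have h1 : (phi m z) % (((m + 1 : ℕ)) : ℤ) = z % m := by
    have hd := Int.mul_ediv_add_emod z m
    have he : phi m z = z % m + ((m:ℤ) + 1) * (z / m) := by
      unfold phi; linear_combination -hd
    push_cast
    rw [he, Int.add_mul_emod_self_left]
    exact Int.emod_eq_of_lt (Int.emod_nonneg z (by omega)) (by
      have := Int.emod_lt_of_pos z hm; omega)
  ext
  have h2 := finZ_val (m + 1) (phi m z)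
  have h3 := finZ_val m z
  rw [eF_val]
  omega

variable {f : Fin (m + 1) × Fin (m + 1) → ℤ}

lemma liftg (a b : ℤ) :
    liftF m (fun p => f (eP m p)) a b = liftF (m + 1) f (phi m a) (phi m b) := by
  rw [liftF_eval, liftF_eval, phi_lift, phi_lift]
  rfl

lemma frz_del (hm : 2 ≤ m) (hf : Frz (m + 1) f) (hone : f (x0 m) = 1) :
    Frz m (fun p => f (eP m p)) := by
  refine ⟨fun p => hf.pos _, ?_, ?_, ?_⟩
  · intro i
    by_cases h : i.val + 1 = m
    · have e1 : eP m (i, i + 1) = x0 m := by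
        unfold eP x0
        have v1 : (i + 1).val = 0 := by
          rw [Fin.add_def, Fin.val_one']
          have h1 : (1:ℕ) % m = 1 := Nat.mod_eq_of_lt (by omega)
          have h4 : (i.val + 1 % m) % m = m % m := by congr 1; omega
          show (i.val + 1 % m) % m = 0
          rw [h4, Nat.mod_self]
        refine Prod.ext ?_ ?_ <;> ext <;> simp only [eF_val]
        · omega
        · rw [v1]
      rw [e1]; exact hone
    · have hlt : i.val + 1 < m := by have := i.isLt; omega
      have v1 : (i + 1).val = i.val + 1 := by
        rw [Fin.add_def, Fin.val_one']
        have h1 : (1:ℕ) % m = 1 := Nat.mod_eq_of_lt (by omega)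
        rw [h1]
        exact Nat.mod_eq_of_lt hlt
      have e1 : eP m (i, i + 1) = (eF m i, eF m i + 1) := by
        unfold eP
        refine Prod.ext rfl ?_
        show eF m (i + 1) = eF m i + 1
        have rhs : (eF m i + 1).val = i.val + 1 := by
          rw [Fin.add_def, Fin.val_one']
          have h1 : (1:ℕ) % (m+1) = 1 := Nat.mod_eq_of_lt (by omega)
          rw [eF_val, h1]
          exact Nat.mod_eq_of_lt (by omega)
        ext
        rw [eF_val, v1, rhs]
      rw [e1]
      exact hf.bd (eF m i)
  · intro a b c d h1 h2 h3 h4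
    rw [liftg, liftg, liftg, liftg, liftg, liftg]
    refine hf.ptol _ _ _ _ (phi_smono m h1) (phi_smono m h2) (phi_smono m h3) ?_
    calc phi m d ≤ phi m (a + m) := phi_mono m h4
      _ = phi m a + ((m:ℤ) + 1) := phi_shift m a
      _ = phi m a + ((m + 1 : ℕ) : ℤ) := by push_cast; ring
  · intro i j hne
    refine hf.pend (eF m i) (eF m j) ?_
    intro h
    apply hne
    ext
    have : (eF m i).val = (eF m j).val := by rw [h]
    simpa [eF_val] using this

lemma tri_del (hm : 2 ≤ m) (hf : Frz (m + 1) f) (hone : f (x0 m) = 1)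
    (T' : Finset (Fin m × Fin m)) (hT' : IsOTri m T')
    (h1' : ∀ τ ∈ T', f (eP m τ) = 1) :
    IsOTri (m + 1) (T'.image (eP m) ∪ {x0 m}) ∧
      ∀ τ ∈ T'.image (eP m) ∪ {x0 m}, f τ = 1 := by
  obtain ⟨hv, hnc, hmax⟩ := hT'
  constructor
  · refine ⟨?_, ?_, ?_⟩
    · intro a ha
      rcases Finset.mem_union.1 ha with h | h
      · obtain ⟨b, hb, rfl⟩ := Finset.mem_image.1 h
        exact ovalid_e m b (hv b hb)
      · rw [Finset.mem_singleton.1 h]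
        exact x0_valid m hm
    · intro a ha b hb hne hcr
      rcases Finset.mem_union.1 ha with h | h <;> rcases Finset.mem_union.1 hb with h2 | h2
      · obtain ⟨a', ha', rfl⟩ := Finset.mem_image.1 h
        obtain ⟨b', hb', rfl⟩ := Finset.mem_image.1 h2
        exact hnc a' ha' b' hb' (fun hc => hne (by rw [hc])) ((ocross_e m a' b').1 hcr)
      · obtain ⟨a', ha', rfl⟩ := Finset.mem_image.1 h
        rw [Finset.mem_singleton.1 h2] at hcr
        exact eP_not_cross_x0 m hm a' hcr
      · obtain ⟨b', hb', rfl⟩ := Finset.mem_image.1 h2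
        rw [Finset.mem_singleton.1 h] at hcr
        have : OCross (m+1) (eP m b') (x0 m) := Or.symm hcr
        exact eP_not_cross_x0 m hm b' this
      · exact hne ((Finset.mem_singleton.1 h).trans (Finset.mem_singleton.1 h2).symm)
    · intro a hva hna
      by_cases he : a.1.val = m ∨ a.2.val = m
      · exact ⟨x0 m, Finset.mem_union_right _ (Finset.mem_singleton_self _),
          endpoint_cross_x0 m hm a hva he⟩
      · push_neg at he
        obtain ⟨he1, he2⟩ := he
        have l1 : a.1.val < m := by have := a.1.isLt; omega
        have l2 : a.2.val < m := by have := a.2.isLt; omega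
        set a' : Fin m × Fin m := (⟨a.1.val, l1⟩, ⟨a.2.val, l2⟩) with ha'
        have hea : eP m a' = a := by
          unfold eP
          refine Prod.ext ?_ ?_ <;> ext <;> simp [ha', eF_val]
        have hax0 : a ≠ x0 m := by
          intro hc
          apply hna
          rw [hc]
          exact Finset.mem_union_right _ (Finset.mem_singleton_self _)
        have hva' : OValid m a' := by
          have hvx : ¬ (a.1.val = m - 1 ∧ a.2.val = 0) := by
            intro ⟨hc1, hc2⟩
            apply hax0
            unfold x0
            refine Prod.ext ?_ ?_ <;> ext <;> simp only []
            · exact hc1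
            · exact hc2
          unfold OValid at hva ⊢
          simp only [olen_val, ha'] at hva ⊢
          split_ifs at hva ⊢ <;> omega
        have hna' : a' ∉ T' := by
          intro hc
          apply hna
          rw [← hea]
          exact Finset.mem_union_left _ (Finset.mem_image_of_mem _ hc)
        obtain ⟨b', hb', hcr'⟩ := hmax a' hva' hna'
        refine ⟨eP m b', Finset.mem_union_left _ (Finset.mem_image_of_mem _ hb'), ?_⟩
        rw [← hea]
        exact (ocross_e m a' b').2 hcr'
  · intro τ hτ
    rcases Finset.mem_union.1 hτ with h | h
    · obtain ⟨b, hb, rfl⟩ := Finset.mem_image.1 h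
      exact h1' b hb
    · rw [Finset.mem_singleton.1 h]
      exact hone

end Del2

lemma isOTri1 : IsOTri 1 (∅ : Finset (Fin 1 × Fin 1)) := by
  refine ⟨fun a ha => absurd ha (Finset.notMem_empty a),
    fun a ha => absurd ha (Finset.notMem_empty a), ?_⟩
  intro a hv _
  exfalso
  have h : a.1 = a.2 := Subsingleton.elim _ _
  unfold OValid at hv
  rw [h, show olen 1 a.2 a.2 = 1 from if_pos rfl] at hv
  omega

lemma ogap_two (x y : Fin 2) (h : x ≠ y) : ogap 2 x y = 1 := by
  have hv : x.val ≠ y.val := fun hc => h (by ext; omega)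
  have h1 := x.isLt; have h2 := y.isLt
  rw [ogap_val]
  split_ifs <;> omega

lemma isOTri2 (p : Fin 2) : IsOTri 2 {(p, p)} := by
  refine ⟨?_, ?_, ?_⟩
  · intro a ha
    rw [Finset.mem_singleton.1 ha]
    unfold OValid
    rw [show olen 2 p p = 2 from if_pos rfl]
  · intro a ha b hb hne
    rw [Finset.mem_singleton.1 ha, Finset.mem_singleton.1 hb] at hne
    exact absurd rfl hne
  · intro a hv hna
    have h : a.1 = a.2 := by
      by_contra hc
      unfold OValid at hv
      rw [olen_eq_ogap 2 hc, ogap_two a.1 a.2 hc] at hv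
      omega
    have hq : a.1 ≠ p := by
      intro hc
      apply hna
      rw [Finset.mem_singleton]
      have h2 : a.2 = p := by rw [← h]; exact hc
      exact Prod.ext hc h2
    refine ⟨(p, p), Finset.mem_singleton_self _, Or.inl ?_⟩
    rw [ogap_two a.1 p hq, ← h, show olen 2 a.1 a.1 = 2 from if_pos rfl,
      show olen 2 p p = 2 from if_pos rfl]
    omega

lemma exTri1 (f : Fin 1 × Fin 1 → ℤ) :
    ∃ T : Finset (Fin 1 × Fin 1), IsOTri 1 T ∧ ∀ τ ∈ T, f τ = 1 :=
  ⟨∅, isOTri1, by simp⟩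

lemma exTri2 (f : Fin 2 × Fin 2 → ℤ) (hf : Frz 2 f) :
    ∃ T : Finset (Fin 2 × Fin 2), IsOTri 2 T ∧ ∀ τ ∈ T, f τ = 1 := by
  have h01 : f (0, 1) = 1 := by
    have h := hf.bd 0
    have e : (0 : Fin 2) + 1 = 1 := by decide
    rwa [e] at h
  have h10 : f (1, 0) = 1 := by
    have h := hf.bd 1
    have e : (1 : Fin 2) + 1 = 0 := by decide
    rwa [e] at h
  have hp := hf.pend 0 1 (by decide)
  rw [h01, h10] at hp
  by_cases h00 : f (0, 0) = 1
  · refine ⟨{(0, 0)}, isOTri2 0, ?_⟩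
    intro τ hτ
    rw [Finset.mem_singleton.1 hτ]
    exact h00
  · have h11 : f (1, 1) = 1 := by
      have p0 := hf.pos (0, 0)
      have p1 := hf.pos (1, 1)
      have h2 : 2 ≤ f (0, 0) := by omega
      by_contra hc
      have h3 : 2 ≤ f (1, 1) := by omega
      nlinarith
    refine ⟨{(1, 1)}, isOTri2 1, ?_⟩
    intro τ hτ
    rw [Finset.mem_singleton.1 hτ]
    exact h11

theorem exTri : ∀ (n : ℕ) [NeZero n] (f : Fin n × Fin n → ℤ), Frz n f →
    ∃ T : Finset (Fin n × Fin n), IsOTri n T ∧ ∀ τ ∈ T, f τ = 1 := by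
  intro n
  induction n using Nat.strong_induction_on with
  | _ n ih =>
    intro inst f hf
    rcases Nat.lt_or_ge n 3 with hn | hn
    · have h1 : 1 ≤ n := npos n
      interval_cases n
      · exact exTri1 f
      · exact exTri2 f hf
    · obtain ⟨z, hz⟩ := exist_one n hf hn
      obtain ⟨m, rfl⟩ : ∃ m, n = m + 1 := ⟨n - 1, by omega⟩
      have hm : 2 ≤ m := by omega
      have him : NeZero m := ⟨by omega⟩
      obtain ⟨r, hr⟩ : ∃ r : Fin (m + 1), r = finZ (m + 1) (z + 1) := ⟨_, rfl⟩
      have hf' : Frz (m + 1) (fun p => f (p.1 + r, p.2 + r)) := frz_rot (m + 1) hf r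
      have hone : (fun p : Fin (m+1) × Fin (m+1) => f (p.1 + r, p.2 + r)) (x0 m) = 1 := by
        show f ((x0 m).1 + r, (x0 m).2 + r) = 1
        have e2 : (x0 m).2 + r = finZ (m + 1) (z + 1) := by
          have hx02 : (x0 m).2 = 0 := by
            ext
            show 0 = (0 : Fin (m+1)).val
            simp
          rw [hx02, zero_add, hr]
        have e1 : (x0 m).1 + r = finZ (m + 1) (z - 1) := by
          rw [add_comm ((x0 m).1) r, hr, ← finZ_add_fin (m + 1) (z + 1) ((x0 m).1)]
          apply finZ_congr
          have hxv : ((x0 m).1.val : ℤ) = (m : ℤ) - 1 := by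
            have : (x0 m).1.val = m - 1 := rfl
            omega
          calc (z + 1 + ((x0 m).1.val : ℤ)) % ((m + 1 : ℕ) : ℤ)
              = ((z - 1) + ((m + 1 : ℕ) : ℤ) * 1) % ((m + 1 : ℕ) : ℤ) := by
                congr 1
                push_cast
                omega
            _ = (z - 1) % ((m + 1 : ℕ) : ℤ) :=
                Int.add_mul_emod_self_left (z - 1) (((m + 1 : ℕ)) : ℤ) 1
        rw [e1, e2]
        rw [liftF_eval] at hz
        exact hz
      have hg : Frz m (fun p => (fun q : Fin (m+1) × Fin (m+1) => f (q.1 + r, q.2 + r)) (eP m p)) :=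
        frz_del m hm hf' hone
      obtain ⟨T', hT', h1'⟩ := ih m (by omega) _ hg
      obtain ⟨hTri, hVal⟩ := tri_del m hm hf' hone T' hT' h1'
      refine ⟨(T'.image (eP m) ∪ {x0 m}).image (rotP (m + 1) r),
        isOTri_rot (m + 1) r _ hTri, ?_⟩
      intro τ hτ
      obtain ⟨τ', h', rfl⟩ := Finset.mem_image.1 hτ
      exact hVal τ' h'


/-- every positive integral frieze `f` on the polygon `P_n^⋆` with one
interior orbifold point of order 3 — i.e. `f = 1` on boundary segments, `f` satisfies
the Ptolemy/skein relations for crossing standard arcs (formulated on the universal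
cover, so that instances involving a pending arc as a resolved term are included), and
the pending–pending skein relation
`f(i,i)f(j,j) = f(i,j)² + λ₃·f(i,j)f(j,i) + f(j,i)²` with `λ₃ = 1` — is unitary:
there is a unique triangulation `T` of `P_n^⋆` with `f(τ) = 1` for all `τ ∈ T`. -/
theorem stmt17 (n : ℕ) [NeZero n] (f : Fin n × Fin n → ℤ)
    (hpos : ∀ p : Fin n × Fin n, 0 < f p)
    (hbd : ∀ i : Fin n, f (i, i + 1) = 1)
    (hptolemy : ∀ a b c d : ℤ, a < b → b < c → c < d → d ≤ a + n →
      liftF n f a c * liftF n f b d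
        = liftF n f a b * liftF n f c d + liftF n f a d * liftF n f b c)
    (hpend : ∀ i j : Fin n, i ≠ j →
      f (i, i) * f (j, j) = f (i, j) ^ 2 + f (i, j) * f (j, i) + f (j, i) ^ 2) :
    ∃! T : Finset (Fin n × Fin n), IsOTri n T ∧ ∀ τ ∈ T, f τ = 1 := by
  have hf : Frz n f := ⟨hpos, hbd, hptolemy, hpend⟩
  obtain ⟨T, hT, hT1⟩ := exTri n f hf
  refine ⟨T, ⟨hT, hT1⟩, ?_⟩
  rintro T₂ ⟨hT₂, hT₂1⟩
  apply Finset.Subset.antisymm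
  · intro a ha
    by_contra hna
    obtain ⟨b, hb, hcr⟩ := hT.2.2 a (hT₂.1 a ha) hna
    exact (noCrossOnes n hf hcr (hT₂1 a ha) (hT1 b hb)).elim
  · intro a ha
    by_contra hna
    obtain ⟨b, hb, hcr⟩ := hT₂.2.2 a (hT.1 a ha) hna
    exact (noCrossOnes n hf hcr (hT1 a ha) (hT₂1 b hb)).elim
end
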